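/- arXiv:1909.06905 — 3 statements merged into one kernel-verified Lean document; each statement's English description precedes it below -/
import Mathlib

section
/- Let x = (x_i), y = (y_i) ∈ 𝐜(I) have all entries nonzero and satisfy x > y. Let u be a continuous L-linear operator on 𝐜(I,x) which is completely continuous and satisfies u(𝐬(I,y)) ⊆ 𝐬(I,y). Then the Fredholm determinant det(1 − su | B(I,y)) exists (i.e., all the sums defining its coefficients converge), and det(1 − su | B(I,y)) = det(1 − su | B(I,x)) as formal power series in s. -/
open Filter Topology
open scoped Classical

noncomputable section

namespace FredholmStmt

variable {L : Type*} [NontriviallyNormedField L]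

/-- Membership in `𝐬(I,b)`: families of the form `(cᵢ bᵢ)` with bounded `(cᵢ)`. -/
def sBall {I : Type*} (b : I → L) : Set (I → L) :=
  {f | ∃ C : ℝ, ∀ i, ‖f i‖ ≤ C * ‖b i‖}

/-- Membership in `𝐜(I,b)`: families of the form `(cᵢ bᵢ)` with `cᵢ → 0` along the
cofinite filter. -/
def cBall {I : Type*} (b : I → L) : Set (I → L) :=
  {f | f ∈ sBall b ∧ ∀ ε : ℝ, 0 < ε → {i | ε * ‖b i‖ < ‖f i‖}.Finite}

/-- `b ∈ 𝐜(I)`: the family `b` tends to `0` along the cofinite filter on `I`. -/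
def cZero {I : Type*} (b : I → L) : Prop :=
  ∀ ε : ℝ, 0 < ε → {i | ε < ‖b i‖}.Finite

/-- The partial order `x > y` on `𝐜(I)`: `v_p(yᵢ) - v_p(xᵢ) → ∞`, i.e. `‖yᵢ‖/‖xᵢ‖ → 0`,
along the cofinite filter. -/
def gtRel {I : Type*} (x y : I → L) : Prop :=
  ∀ ε : ℝ, 0 < ε → {i | ε * ‖x i‖ < ‖y i‖}.Finite

/-- The norm of `𝐜(I,b)` and `𝐬(I,b)` (for which `B(I,b)` is an integral basis). -/
def normB {I : Type*} (b f : I → L) : ℝ := ⨆ i, ‖f i‖ / ‖b i‖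

/-- The sup norm of `𝐬(I)`. -/
def supNorm {I : Type*} (f : I → L) : ℝ := ⨆ i, ‖f i‖

/-- `u` is `L`-linear on the subspace `D`. -/
def IsLinearOn {I : Type*} (u : (I → L) → I → L) (D : Set (I → L)) : Prop :=
  (∀ f ∈ D, ∀ g ∈ D, u (f + g) = u f + u g) ∧
    ∀ (c : L), ∀ f ∈ D, u (c • f) = c • u f

/-- `u` has finite-dimensional image on `D`. -/
def FiniteRankOn {I : Type*} (u : (I → L) → I → L) (D : Set (I → L)) : Prop :=
  ∃ G : Submodule L (I → L), FiniteDimensional L G ∧ ∀ f ∈ D, u f ∈ G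

/-- `u` is a completely continuous operator on `𝐜(I,b)`: it is the limit, in the
operator norm, of continuous operators with finite-dimensional image. -/
def CompletelyContinuousOn {I : Type*} (u : (I → L) → I → L) (b : I → L) : Prop :=
  ∀ ε : ℝ, 0 < ε → ∃ u' : (I → L) → I → L,
    IsLinearOn u' (cBall b) ∧
    (∃ C : ℝ, ∀ f ∈ cBall b, normB b (u' f) ≤ C * normB b f) ∧
    FiniteRankOn u' (cBall b) ∧
    ∀ f ∈ cBall b, normB b (u f - u' f) ≤ ε * normB b f

/-- The matrix `(n_{ij})` of `u` in the basis `B(I,b) = {bⱼ eⱼ}`: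
`u(bⱼ eⱼ) = ∑ᵢ n_{ij} bᵢ eᵢ`. -/
def matrixOf {I : Type*} (u : (I → L) → I → L) (b : I → L) : I → I → L :=
  fun i j => u (fun k => if k = j then b j else 0) i / b i

/-- The term of the Fredholm determinant attached to a finite subset `S` of the index
set: `∑_{σ ∈ Sym(S)} sgn(σ) ∏_{i ∈ S} n_{i σ(i)}`. -/
def fredholmTerm {ι : Type*} (nm : ι → ι → L) (S : Finset ι) : L :=
  ∑ σ : Equiv.Perm {i // i ∈ S},
    ((Equiv.Perm.sign σ : ℤ) : L) * ∏ i : {i // i ∈ S}, nm i.1 (σ i).1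

/-- The `n`-th coefficient `cₙ` of the Fredholm determinant `det(1 - su) = ∑ cₙ sⁿ`:
`cₙ = (-1)ⁿ ∑_{|S| = n} ∑_{σ ∈ Sym(S)} sgn(σ) ∏_{i ∈ S} n_{i σ(i)}`. -/
def detCoeff {ι : Type*} (nm : ι → ι → L) (n : ℕ) : L :=
  (-1 : L) ^ n * ∑' S : {S : Finset ι // S.card = n}, fredholmTerm nm S.1

/-- The additive valuation `v_p` on `L` (with values in `EReal`, `v_p(0) = ⊤`),
normalized by `v_p(p) = 1` when `‖p‖ = p⁻¹`. -/
def vpE (p : ℕ) (z : L) : EReal :=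
  if z = 0 then ⊤ else ((-(Real.log ‖z‖ / Real.log p) : ℝ) : EReal)

/-- `col_w(nm)`: the smallest `p`-adic valuation occurring in the column `w` of the
matrix `nm`. -/
def colOf {ι : Type*} (p : ℕ) (nm : ι → ι → L) (w : ι) : EReal :=
  ⨅ w' : ι, vpE p (nm w' w)

set_option maxHeartbeats 1000000
set_option linter.unusedSectionVars false
set_option linter.unusedVariables false

section Infra

variable {I : Type*}

lemma cBall_zero_mem (x : I → L) : (0 : I → L) ∈ cBall x := by
  refine ⟨⟨0, fun i => by simp⟩, fun ε hε => Set.Finite.subset Set.finite_empty ?_⟩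
  intro i hi
  simp only [Set.mem_setOf_eq, Pi.zero_apply, norm_zero] at hi
  exact absurd hi (mul_nonneg hε.le (norm_nonneg _)).not_gt

/-- `cBall x` as a submodule of `I → L`. -/
def MX (x : I → L) : Submodule L (I → L) where
  carrier := cBall x
  zero_mem' := cBall_zero_mem x
  add_mem' := by
    rintro f g ⟨⟨C1, h1⟩, hf2⟩ ⟨⟨C2, h2⟩, hg2⟩
    refine ⟨⟨C1 + C2, fun i => ?_⟩, fun ε hε => ?_⟩
    · calc ‖(f + g) i‖ ≤ ‖f i‖ + ‖g i‖ := norm_add_le _ _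
        _ ≤ C1 * ‖x i‖ + C2 * ‖x i‖ := add_le_add (h1 i) (h2 i)
        _ = (C1 + C2) * ‖x i‖ := (add_mul _ _ _).symm
    · refine Set.Finite.subset ((hf2 (ε/2) (half_pos hε)).union (hg2 (ε/2) (half_pos hε))) ?_
      intro i hi
      simp only [Set.mem_setOf_eq, Pi.add_apply] at hi
      by_contra hcon
      simp only [Set.mem_union, Set.mem_setOf_eq, not_or, not_lt] at hcon
      have : ‖f i + g i‖ ≤ ε / 2 * ‖x i‖ + ε / 2 * ‖x i‖ :=
        (norm_add_le _ _).trans (add_le_add hcon.1 hcon.2)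
      rw [← add_mul, add_halves] at this
      exact absurd hi this.not_gt
  smul_mem' := by
    rintro c f ⟨⟨C, h⟩, hf2⟩
    rcases eq_or_ne c 0 with rfl | hc
    · simpa [zero_smul] using cBall_zero_mem x
    have hc' : (0:ℝ) < ‖c‖ := norm_pos_iff.2 hc
    refine ⟨⟨‖c‖ * C, fun i => ?_⟩, fun ε hε => ?_⟩
    · rw [Pi.smul_apply, norm_smul, mul_assoc]
      exact mul_le_mul_of_nonneg_left (h i) (norm_nonneg c)
    · refine Set.Finite.subset (hf2 (ε / ‖c‖) (div_pos hε hc')) ?_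
      intro i hi
      simp only [Set.mem_setOf_eq, Pi.smul_apply, norm_smul] at hi ⊢
      rw [div_mul_eq_mul_div, div_lt_iff₀ hc']
      calc ε * ‖x i‖ < ‖c‖ * ‖f i‖ := hi
        _ = ‖f i‖ * ‖c‖ := mul_comm _ _

@[simp] lemma mem_MX_iff {x f : I → L} : f ∈ MX x ↔ f ∈ cBall x := Iff.rfl

variable [Nonempty I]

lemma normB_nonneg (x f : I → L) : 0 ≤ normB x f :=
  Real.iSup_nonneg fun i => div_nonneg (norm_nonneg _) (norm_nonneg _)

lemma norm_x_pos {x : I → L} (hx0 : ∀ i, x i ≠ 0) (i : I) : (0:ℝ) < ‖x i‖ :=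
  norm_pos_iff.2 (hx0 i)

lemma bddAbove_ratio {x : I → L} (hx0 : ∀ i, x i ≠ 0) {f : I → L} (hf : f ∈ sBall x) :
    BddAbove (Set.range fun i => ‖f i‖ / ‖x i‖) := by
  obtain ⟨C, hC⟩ := hf
  refine ⟨C, ?_⟩
  rintro r ⟨i, rfl⟩
  exact (div_le_iff₀ (norm_x_pos hx0 i)).2 (hC i)

lemma ratio_le_normB {x : I → L} (hx0 : ∀ i, x i ≠ 0) {f : I → L} (hf : f ∈ sBall x) (i : I) :
    ‖f i‖ / ‖x i‖ ≤ normB x f :=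
  le_ciSup (bddAbove_ratio hx0 hf) i

lemma norm_le_normB {x : I → L} (hx0 : ∀ i, x i ≠ 0) {f : I → L} (hf : f ∈ sBall x) (i : I) :
    ‖f i‖ ≤ normB x f * ‖x i‖ :=
  (div_le_iff₀ (norm_x_pos hx0 i)).1 (ratio_le_normB hx0 hf i)

lemma normB_le {x : I → L} (hx0 : ∀ i, x i ≠ 0) {f : I → L} {C : ℝ}
    (h : ∀ i, ‖f i‖ ≤ C * ‖x i‖) : normB x f ≤ C :=
  ciSup_le fun i => (div_le_iff₀ (norm_x_pos hx0 i)).2 (h i)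

@[simp] lemma normB_zero (x : I → L) : normB x (0 : I → L) = 0 := by
  simp [normB]

lemma eq_zero_of_normB_eq_zero {x : I → L} (hx0 : ∀ i, x i ≠ 0) {f : I → L}
    (hf : f ∈ sBall x) (h : normB x f = 0) : f = 0 := by
  funext i
  have := norm_le_normB hx0 hf i
  rw [h, zero_mul] at this
  simpa using norm_le_zero_iff.1 this

@[simp] lemma normB_neg (x f : I → L) : normB x (-f) = normB x f := by
  simp [normB]

lemma normB_add_le [IsUltrametricDist L] {x : I → L} (hx0 : ∀ i, x i ≠ 0) {f g : I → L}
    (hf : f ∈ sBall x) (hg : g ∈ sBall x) :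
    normB x (f + g) ≤ max (normB x f) (normB x g) := by
  refine normB_le hx0 fun i => ?_
  calc ‖(f + g) i‖ ≤ max ‖f i‖ ‖g i‖ := IsUltrametricDist.norm_add_le_max _ _
    _ ≤ max (normB x f * ‖x i‖) (normB x g * ‖x i‖) :=
        max_le_max (norm_le_normB hx0 hf i) (norm_le_normB hx0 hg i)
    _ = max (normB x f) (normB x g) * ‖x i‖ :=
        (max_mul_of_nonneg _ _ (norm_nonneg _)).symm

lemma normB_sub_le [IsUltrametricDist L] {x : I → L} (hx0 : ∀ i, x i ≠ 0) {f g : I → L}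
    (hf : f ∈ sBall x) (hg : g ∈ sBall x) :
    normB x (f - g) ≤ max (normB x f) (normB x g) := by
  rw [sub_eq_add_neg]
  have hng : -g ∈ sBall x := by
    obtain ⟨C, hC⟩ := hg; exact ⟨C, fun i => by simpa using hC i⟩
  simpa using normB_add_le hx0 hf hng

lemma normB_smul_le {x : I → L} (hx0 : ∀ i, x i ≠ 0) {f : I → L} (hf : f ∈ sBall x) (c : L) :
    normB x (c • f) ≤ ‖c‖ * normB x f := by
  refine normB_le hx0 fun i => ?_
  rw [Pi.smul_apply, norm_smul, mul_assoc]
  exact mul_le_mul_of_nonneg_left (norm_le_normB hx0 hf i) (norm_nonneg c)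

lemma sBall_smul_mem {x : I → L} {f : I → L} (hf : f ∈ sBall x) (c : L) : c • f ∈ sBall x := by
  obtain ⟨C, hC⟩ := hf
  exact ⟨‖c‖ * C, fun i => by
    rw [Pi.smul_apply, norm_smul, mul_assoc]
    exact mul_le_mul_of_nonneg_left (hC i) (norm_nonneg c)⟩

lemma normB_smul {x : I → L} (hx0 : ∀ i, x i ≠ 0) {f : I → L} (hf : f ∈ sBall x) (c : L) :
    normB x (c • f) = ‖c‖ * normB x f := by
  rcases eq_or_ne c 0 with rfl | hc
  · simp
  refine le_antisymm (normB_smul_le hx0 hf c) ?_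
  have h2 : normB x f ≤ ‖c‖⁻¹ * normB x (c • f) := by
    have := normB_smul_le hx0 (sBall_smul_mem hf c) c⁻¹
    rw [inv_smul_smul₀ hc, norm_inv] at this
    exact this
  calc ‖c‖ * normB x f ≤ ‖c‖ * (‖c‖⁻¹ * normB x (c • f)) :=
        mul_le_mul_of_nonneg_left h2 (norm_nonneg c)
    _ = normB x (c • f) := by
        rw [← mul_assoc, mul_inv_cancel₀ (norm_pos_iff.2 hc).ne', one_mul]

/-- The basis vector `x_j e_j`. -/
def bx (x : I → L) (j : I) : I → L := fun k => if k = j then x j else 0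

lemma bx_def (x : I → L) (j : I) : bx x j = fun k => if k = j then x j else 0 := rfl

lemma bx_mem_MX (x : I → L) (j : I) : bx x j ∈ MX x := by
  refine ⟨⟨1, fun i => ?_⟩, fun ε hε => Set.Finite.subset (Set.finite_singleton j) ?_⟩
  · by_cases h : i = j
    · subst h; simp [bx]
    · simp [bx, h, norm_nonneg]
  · intro i hi
    simp only [Set.mem_setOf_eq, bx] at hi
    by_contra h
    simp only [Set.mem_singleton_iff] at h
    rw [if_neg h] at hi
    simp only [norm_zero] at hi
    exact absurd hi (mul_nonneg hε.le (norm_nonneg _)).not_gt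

lemma normB_bx {x : I → L} (hx0 : ∀ i, x i ≠ 0) (j : I) : normB x (bx x j) = 1 := by
  refine le_antisymm (normB_le hx0 fun i => ?_) ?_
  · by_cases h : i = j
    · subst h; simp [bx]
    · simp [bx, h, norm_nonneg]
  · have := ratio_le_normB hx0 (bx_mem_MX x j).1 j
    rwa [bx, if_pos rfl, div_self (norm_x_pos hx0 j).ne'] at this

end Infra

section Closed

variable [IsUltrametricDist L] {I : Type*} [Nonempty I]

/-- A submodule of `cBall x` that is closed with respect to the `normB x` norm. -/
def IsNClosed (x : I → L) (K : Submodule L (I → L)) : Prop :=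
  K ≤ MX x ∧ ∀ f ∈ MX x, (∀ ε : ℝ, 0 < ε → ∃ g ∈ K, normB x (f - g) < ε) → f ∈ K

lemma sBall_of_mem {x : I → L} {K : Submodule L (I → L)} (hKM : K ≤ MX x) {g : I → L}
    (hg : g ∈ K) : g ∈ sBall x := (mem_MX_iff.1 (hKM hg)).1

lemma exists_dist_pos {x : I → L} {K : Submodule L (I → L)} (hK : IsNClosed x K)
    {v : I → L} (hv : v ∈ MX x) (hvK : v ∉ K) :
    ∃ δ : ℝ, 0 < δ ∧ ∀ g ∈ K, δ ≤ normB x (v - g) := by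
  by_contra hcon
  push_neg at hcon
  exact hvK (hK.2 v hv fun ε hε => by
    obtain ⟨g, hg, hlt⟩ := hcon ε hε
    exact ⟨g, hg, hlt⟩)

lemma normB_coeff_lower {x : I → L} (hx0 : ∀ i, x i ≠ 0) {K : Submodule L (I → L)}
    (hKM : K ≤ MX x) {q : I → L} (hq : q ∈ MX x) {δ : ℝ} (hδ : 0 ≤ δ)
    (hlow : ∀ g ∈ K, δ ≤ normB x (q - g)) :
    ∀ (a : L), ∀ g ∈ K, ‖a‖ * δ ≤ normB x (g + a • q) := by
  intro a g hg
  rcases eq_or_ne a 0 with rfl | ha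
  · simpa using normB_nonneg x g
  have ha' : (0:ℝ) < ‖a‖ := norm_pos_iff.2 ha
  have hgM : g ∈ MX x := hKM hg
  have key : g + a • q = a • (q - (-a⁻¹) • g) := by
    rw [smul_sub, smul_smul]
    rw [mul_neg, mul_inv_cancel₀ ha, neg_smul, one_smul]
    abel
  have hmem : q - (-a⁻¹) • g ∈ MX x := by
    exact Submodule.sub_mem _ hq (Submodule.smul_mem _ _ hgM)
  rw [key, normB_smul hx0 (mem_MX_iff.1 hmem).1 a]
  exact mul_le_mul_of_nonneg_left (hlow _ (K.smul_mem _ hg)) (norm_nonneg a)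

/-- The `normB`-closure of a submodule of `cBall x`. -/
def closureK (x : I → L) (hx0 : ∀ i, x i ≠ 0) (K₀ : Submodule L (I → L)) :
    Submodule L (I → L) where
  carrier := {f | f ∈ MX x ∧ ∀ ε : ℝ, 0 < ε → ∃ g ∈ K₀ ⊓ MX x, normB x (f - g) < ε}
  zero_mem' := ⟨(MX x).zero_mem, fun ε hε => ⟨0, Submodule.zero_mem _, by simpa using hε⟩⟩
  add_mem' := by
    rintro f₁ f₂ ⟨hf₁M, h₁⟩ ⟨hf₂M, h₂⟩
    refine ⟨Submodule.add_mem _ hf₁M hf₂M, fun ε hε => ?_⟩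
    obtain ⟨g₁, hg₁, hd₁⟩ := h₁ ε hε
    obtain ⟨g₂, hg₂, hd₂⟩ := h₂ ε hε
    refine ⟨g₁ + g₂, Submodule.add_mem _ hg₁ hg₂, ?_⟩
    have hkey : f₁ + f₂ - (g₁ + g₂) = (f₁ - g₁) + (f₂ - g₂) := by abel
    rw [hkey]
    have m₁ : f₁ - g₁ ∈ MX x := Submodule.sub_mem _ hf₁M hg₁.2
    have m₂ : f₂ - g₂ ∈ MX x := Submodule.sub_mem _ hf₂M hg₂.2
    exact lt_of_le_of_lt (normB_add_le hx0 (mem_MX_iff.1 m₁).1 (mem_MX_iff.1 m₂).1)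
      (max_lt hd₁ hd₂)
  smul_mem' := by
    rintro c f ⟨hfM, h⟩
    refine ⟨Submodule.smul_mem _ _ hfM, fun ε hε => ?_⟩
    have hpos : 0 < ε / (‖c‖ + 1) := div_pos hε (by positivity)
    obtain ⟨g, hg, hd⟩ := h _ hpos
    refine ⟨c • g, Submodule.smul_mem _ _ hg, ?_⟩
    have hkey : c • f - c • g = c • (f - g) := (smul_sub c f g).symm
    have m : f - g ∈ MX x := Submodule.sub_mem _ hfM hg.2
    rw [hkey]
    calc normB x (c • (f - g)) ≤ ‖c‖ * normB x (f - g) :=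
          normB_smul_le hx0 (mem_MX_iff.1 m).1 c
      _ ≤ ‖c‖ * (ε / (‖c‖ + 1)) := mul_le_mul_of_nonneg_left hd.le (norm_nonneg c)
      _ < ε := by
          rw [mul_div_assoc']
          rw [div_lt_iff₀ (by positivity)]
          have : ‖c‖ < ‖c‖ + 1 := lt_add_one _
          calc ‖c‖ * ε = ε * ‖c‖ := mul_comm _ _
            _ < ε * (‖c‖ + 1) := by
                exact (mul_lt_mul_iff_right₀ hε).2 this

lemma closureK_le {x : I → L} {hx0 : ∀ i, x i ≠ 0} {K₀ : Submodule L (I → L)} :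
    K₀ ⊓ MX x ≤ closureK x hx0 K₀ := by
  intro f hf
  exact ⟨hf.2, fun ε hε => ⟨f, hf, by simpa using hε⟩⟩

lemma closureK_isNClosed {x : I → L} (hx0 : ∀ i, x i ≠ 0) (K₀ : Submodule L (I → L)) :
    IsNClosed x (closureK x hx0 K₀) := by
  constructor
  · intro f hf; exact hf.1
  · intro f hfM happ
    refine ⟨hfM, fun ε hε => ?_⟩
    obtain ⟨g, hg, hd⟩ := happ (ε/2) (half_pos hε)
    obtain ⟨g', hg', hd'⟩ := hg.2 (ε/2) (half_pos hε)
    refine ⟨g', hg', ?_⟩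
    have hkey : f - g' = (f - g) + (g - g') := by abel
    rw [hkey]
    have m₁ : f - g ∈ MX x := Submodule.sub_mem _ hfM hg.1
    have m₂ : g - g' ∈ MX x := Submodule.sub_mem _ hg.1 (Submodule.mem_inf.1 hg').2
    calc normB x ((f - g) + (g - g')) ≤ max (normB x (f - g)) (normB x (g - g')) :=
          normB_add_le hx0 (mem_MX_iff.1 m₁).1 (mem_MX_iff.1 m₂).1
      _ < ε := max_lt (hd.trans_le (by linarith)) (hd'.trans_le (by linarith))

lemma nclosed_sup_singleton [CompleteSpace L] {x : I → L} (hx0 : ∀ i, x i ≠ 0)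
    {K : Submodule L (I → L)} (hK : IsNClosed x K) {q : I → L} (hq : q ∈ MX x)
    (hqK : q ∉ K) : IsNClosed x (K ⊔ Submodule.span L {q}) := by
  obtain ⟨δ, hδpos, hδ⟩ := exists_dist_pos hK hq hqK
  have hlow : ∀ (a : L), ∀ g ∈ K, ‖a‖ * δ ≤ normB x (g + a • q) :=
    normB_coeff_lower hx0 hK.1 hq hδpos.le hδ
  constructor
  · refine sup_le hK.1 ?_
    rw [Submodule.span_le, Set.singleton_subset_iff]
    exact hq
  intro f hfM happ
  -- choose approximating sequence
  have hchoice : ∀ n : ℕ, ∃ g, g ∈ K ∧ ∃ a : L,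
      normB x (f - (g + a • q)) < 1 / (n + 1) := by
    intro n
    obtain ⟨h, hh, hd⟩ := happ (1 / (n + 1)) (by positivity)
    rw [Submodule.mem_sup] at hh
    obtain ⟨g, hg, z, hz, rfl⟩ := hh
    rw [Submodule.mem_span_singleton] at hz
    obtain ⟨a, rfl⟩ := hz
    exact ⟨g, hg, a, hd⟩
  choose g hg a ha using hchoice
  -- the scalars form a Cauchy sequence
  have hmemh : ∀ n, g n + a n • q ∈ MX x :=
    fun n => Submodule.add_mem _ (hK.1 (hg n)) (Submodule.smul_mem _ _ hq)
  have hdiff : ∀ n m : ℕ, ‖a n - a m‖ * δ ≤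
      max (1 / ((n:ℝ) + 1)) (1 / ((m:ℝ) + 1)) := by
    intro n m
    have h1 : (g n - g m) + (a n - a m) • q = (g n + a n • q) - (g m + a m • q) := by
      rw [sub_smul]; abel
    have h2 := hlow (a n - a m) (g n - g m) (Submodule.sub_mem _ (hg n) (hg m))
    rw [h1] at h2
    refine h2.trans ?_
    have h3 : (g n + a n • q) - (g m + a m • q) =
        (f - (g m + a m • q)) - (f - (g n + a n • q)) := by abel
    rw [h3]
    have m₁ : f - (g m + a m • q) ∈ MX x := Submodule.sub_mem _ hfM (hmemh m)
    have m₂ : f - (g n + a n • q) ∈ MX x := Submodule.sub_mem _ hfM (hmemh n)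
    refine (normB_sub_le hx0 (mem_MX_iff.1 m₁).1 (mem_MX_iff.1 m₂).1).trans ?_
    rw [max_comm]
    exact max_le_max (ha n).le (ha m).le
  have hcauchy : CauchySeq a := by
    refine cauchySeq_of_le_tendsto_0 (fun n : ℕ => (1 / (n + 1)) / δ) ?_ ?_
    · intro n m N hn hm
      rw [dist_eq_norm]
      rw [le_div_iff₀ hδpos]
      refine (hdiff n m).trans ?_
      have hcn : ((N:ℝ) + 1) ≤ (n:ℝ) + 1 := by
        have := (Nat.cast_le (α := ℝ)).2 hn; linarith
      have hcm : ((N:ℝ) + 1) ≤ (m:ℝ) + 1 := by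
        have := (Nat.cast_le (α := ℝ)).2 hm; linarith
      refine max_le ?_ ?_
      · exact one_div_le_one_div_of_le (by positivity) hcn
      · exact one_div_le_one_div_of_le (by positivity) hcm
    · have h0 : Tendsto (fun n : ℕ => 1 / ((n:ℝ) + 1)) atTop (𝓝 0) :=
        tendsto_one_div_add_atTop_nhds_zero_nat
      have := h0.div_const δ
      simpa using this
  obtain ⟨A, hA⟩ := cauchySeq_tendsto_of_complete hcauchy
  -- the limit candidate
  have hfa : f - A • q ∈ MX x := Submodule.sub_mem _ hfM (Submodule.smul_mem _ _ hq)
  have hfK : f - A • q ∈ K := by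
    refine hK.2 _ hfa ?_
    intro ε hε
    have hq' : q ∈ sBall x := (mem_MX_iff.1 hq).1
    -- choose n large
    have h1 : ∀ᶠ n : ℕ in atTop, ‖a n - A‖ * (normB x q + 1) < ε := by
      have hn : Tendsto (fun n => ‖a n - A‖) atTop (𝓝 0) :=
        tendsto_iff_norm_sub_tendsto_zero.1 hA
      have := hn.mul_const (normB x q + 1)
      rw [zero_mul] at this
      filter_upwards [(this.eventually (gt_mem_nhds hε) : _)] with n hn'
      exact hn'
    have h2 : ∀ᶠ n : ℕ in atTop, (1:ℝ) / (n + 1) < ε := by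
      obtain ⟨n₀, hn₀⟩ := exists_nat_one_div_lt hε
      filter_upwards [eventually_ge_atTop n₀] with n hn
      refine lt_of_le_of_lt ?_ hn₀
      apply one_div_le_one_div_of_le (by positivity)
      have := (Nat.cast_le (α := ℝ)).2 hn
      push_cast
      linarith
    obtain ⟨n, hn1, hn2⟩ := (h1.and h2).exists
    refine ⟨g n, hg n, ?_⟩
    have hkey : f - A • q - g n = (f - (g n + a n • q)) + (a n - A) • q := by
      rw [sub_smul]; abel
    rw [hkey]
    have m₁ : f - (g n + a n • q) ∈ MX x := Submodule.sub_mem _ hfM (hmemh n)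
    have m₂ : (a n - A) • q ∈ MX x := Submodule.smul_mem _ _ hq
    refine lt_of_le_of_lt (normB_add_le hx0 (mem_MX_iff.1 m₁).1 (mem_MX_iff.1 m₂).1) ?_
    refine max_lt ((ha n).trans hn2) ?_
    calc normB x ((a n - A) • q) ≤ ‖a n - A‖ * normB x q := normB_smul_le hx0 hq' _
      _ ≤ ‖a n - A‖ * (normB x q + 1) := by
          refine mul_le_mul_of_nonneg_left (by linarith) (norm_nonneg _)
      _ < ε := hn1
  have : f = (f - A • q) + A • q := by abel
  rw [this]
  exact Submodule.add_mem _ (Submodule.mem_sup_left hfK)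
    (Submodule.mem_sup_right (Submodule.mem_span_singleton.2 ⟨A, rfl⟩))

lemma almost_projection [CompleteSpace L] {x : I → L} (hx0 : ∀ i, x i ≠ 0)
    (s : Finset (I → L)) :
    (↑s : Set (I → L)) ⊆ (MX x : Set (I → L)) →
    ∀ (K : Submodule L (I → L)), IsNClosed x K →
      (∀ f ∈ MX x, f ∈ K ⊔ Submodule.span L (↑s : Set (I → L))) →
      ∀ c : ℝ, 1 < c →
      ∃ (m : ℕ) (q : Fin m → (I → L)) (KC : ℝ), 0 ≤ KC ∧ (∀ k, q k ∈ MX x) ∧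
        ∀ f ∈ MX x, ∃ a : Fin m → L,
          (f - ∑ k, a k • q k) ∈ K ∧
          normB x (∑ k, a k • q k) ≤ c * normB x f ∧
          ∀ k, ‖a k‖ ≤ KC * normB x f := by
  induction s using Finset.induction_on with
  | empty =>
      intro _ K hK hSP c hc
      refine ⟨0, fun _ => 0, 0, le_refl 0, fun k => k.elim0, ?_⟩
      intro f hf
      have hfK : f ∈ K := by
        have := hSP f hf
        simpa [Submodule.span_empty] using this
      refine ⟨fun _ => 0, by simpa using hfK, ?_, fun k => k.elim0⟩
      simpa using mul_nonneg (by linarith : (0:ℝ) ≤ c) (normB_nonneg x f)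
  | @insert v s' hvs ih =>
      intro hs K hK hSP c hc
      have hv : v ∈ MX x := hs (by simp)
      have hs' : (↑s' : Set (I → L)) ⊆ (MX x : Set (I → L)) := by
        refine Set.Subset.trans ?_ hs
        simp [Finset.coe_insert, Set.subset_insert]
      by_cases hvK : v ∈ K
      · refine ih hs' K hK ?_ c hc
        intro f hf
        have h0 := hSP f hf
        rw [Finset.coe_insert, Submodule.span_insert, ← sup_assoc,
          sup_eq_left.2 ((Submodule.span_singleton_le_iff_mem v K).2 hvK)] at h0
        exact h0
      · obtain ⟨δ, hδpos, hδ⟩ := exists_dist_pos hK hv hvK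
        set dset : Set ℝ := (fun g => normB x (v - g)) '' (K : Set (I → L)) with hdset
        have hdne : dset.Nonempty := ⟨normB x (v - 0), ⟨0, K.zero_mem, rfl⟩⟩
        have hbdd : BddBelow dset := by
          refine ⟨0, ?_⟩
          rintro r ⟨g, hg, rfl⟩
          exact normB_nonneg x _
        set d := sInf dset with hd
        have hdδ : δ ≤ d := by
          refine le_csInf hdne ?_
          rintro r ⟨g, hg, rfl⟩
          exact hδ g hg
        have hdpos : 0 < d := lt_of_lt_of_le hδpos hdδ
        set c' : ℝ := (1 + c)/2 with hc'
        have hc'1 : 1 < c' := by rw [hc']; linarith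
        have hc'c : c' < c := by rw [hc']; linarith
        have hc'pos : 0 < c' := by linarith
        have ht1 : 1 < c / c' := (one_lt_div hc'pos).2 hc'c
        have hdlt : d < (c / c') * d := (lt_mul_iff_one_lt_left hdpos).2 ht1
        obtain ⟨r, hrmem, hrlt⟩ := exists_lt_of_csInf_lt hdne hdlt
        obtain ⟨y, hy, rfl⟩ := hrmem
        set q : I → L := v - y with hqdef
        have hqM : q ∈ MX x := Submodule.sub_mem _ hv (hK.1 hy)
        have hqK : q ∉ K := by
          intro h
          refine hvK ?_
          have : v = q + y := by rw [hqdef]; abel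
          rw [this]
          exact K.add_mem h hy
        have hqlow : ∀ g ∈ K, d ≤ normB x (q - g) := by
          intro g hg
          have : q - g = v - (y + g) := by rw [hqdef]; abel
          rw [this]
          exact csInf_le hbdd ⟨y + g, K.add_mem hy hg, rfl⟩
        have hlowa := normB_coeff_lower hx0 hK.1 hqM hdpos.le hqlow
        set K₁ := K ⊔ Submodule.span L {q} with hK₁def
        have hK₁ : IsNClosed x K₁ := nclosed_sup_singleton hx0 hK hqM hqK
        have hvK₁ : v ∈ K₁ := by
          have : v = q + y := by rw [hqdef]; abel
          rw [this]
          exact Submodule.add_mem _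
            (Submodule.mem_sup_right (Submodule.mem_span_singleton_self q))
            (Submodule.mem_sup_left hy)
        have hSP₁ : ∀ f ∈ MX x, f ∈ K₁ ⊔ Submodule.span L (↑s' : Set (I → L)) := by
          intro f hf
          have h0 := hSP f hf
          rw [Finset.coe_insert, Submodule.span_insert] at h0
          have hle : K ⊔ (Submodule.span L {v} ⊔ Submodule.span L (↑s' : Set (I → L))) ≤
              K₁ ⊔ Submodule.span L (↑s' : Set (I → L)) := by
            refine sup_le (le_trans le_sup_left le_sup_left) (sup_le ?_ le_sup_right)
            refine le_trans ?_ (le_sup_left : K₁ ≤ _)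
            exact (Submodule.span_singleton_le_iff_mem v K₁).2 hvK₁
          exact hle h0
        obtain ⟨m', q', KC', hKC'0, hq'M, hmain⟩ := ih hs' K₁ hK₁ hSP₁ c' hc'1
        refine ⟨m' + 1, Fin.snoc q' q, max KC' (c' / d),
          le_trans hKC'0 (le_max_left _ _), ?_, ?_⟩
        · intro k
          refine Fin.lastCases ?_ ?_ k
          · simpa [Fin.snoc_last] using hqM
          · intro k'; simpa [Fin.snoc_castSucc] using hq'M k'
        · intro f hf
          obtain ⟨a', ha'K₁, ha'norm, ha'coord⟩ := hmain f hf
          set w : I → L := ∑ k, a' k • q' k with hw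
          have hwM : w ∈ MX x :=
            Submodule.sum_mem _ (fun k _ => Submodule.smul_mem _ _ (hq'M k))
          have hmem2 := ha'K₁
          rw [hK₁def, Submodule.mem_sup] at hmem2
          obtain ⟨g, hgK, z, hz, hgz⟩ := hmem2
          rw [Submodule.mem_span_singleton] at hz
          obtain ⟨A, rfl⟩ := hz
          -- hgz : g + A • q = f - w
          have hNf0 : 0 ≤ normB x f := normB_nonneg x f
          have hfwsub : normB x (f - w) ≤ c' * normB x f := by
            refine (normB_sub_le hx0 (mem_MX_iff.1 hf).1 (mem_MX_iff.1 hwM).1).trans ?_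
            refine max_le (by nlinarith) ha'norm
          have hAd : ‖A‖ * d ≤ c' * normB x f := by
            have h5 := hlowa A g hgK
            rw [hgz] at h5
            exact h5.trans hfwsub
          have hA : ‖A‖ ≤ c' / d * normB x f := by
            rw [div_mul_eq_mul_div, le_div_iff₀ hdpos]
            linarith [hAd]
          have hNq : normB x q < c / c' * d := hrlt
          have hAq : normB x (A • q) ≤ c / c' * (c' * normB x f) := by
            refine (normB_smul_le hx0 (mem_MX_iff.1 hqM).1 A).trans ?_
            calc ‖A‖ * normB x q ≤ ‖A‖ * (c / c' * d) :=
                  mul_le_mul_of_nonneg_left hNq.le (norm_nonneg A)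
              _ = c / c' * (‖A‖ * d) := by ring
              _ ≤ c / c' * (c' * normB x f) :=
                  mul_le_mul_of_nonneg_left hAd (by positivity)
          have hAq' : normB x (A • q) ≤ c * normB x f := by
            refine hAq.trans ?_
            rw [← mul_assoc, div_mul_cancel₀ _ hc'pos.ne']
          refine ⟨Fin.snoc a' A, ?_, ?_, ?_⟩
          · have hsum : ∑ k, (Fin.snoc a' A : Fin (m'+1) → L) k •
                (Fin.snoc q' q : Fin (m'+1) → I → L) k = w + A • q := by
              rw [Fin.sum_univ_castSucc]
              simp [Fin.snoc_castSucc, Fin.snoc_last, hw]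
            rw [hsum]
            have : f - (w + A • q) = (f - w) - A • q := by abel
            rw [this, ← hgz]
            simpa using hgK
          · have hsum : ∑ k, (Fin.snoc a' A : Fin (m'+1) → L) k •
                (Fin.snoc q' q : Fin (m'+1) → I → L) k = w + A • q := by
              rw [Fin.sum_univ_castSucc]
              simp [Fin.snoc_castSucc, Fin.snoc_last, hw]
            rw [hsum]
            have hAqM : A • q ∈ MX x := Submodule.smul_mem _ _ hqM
            refine (normB_add_le hx0 (mem_MX_iff.1 hwM).1 (mem_MX_iff.1 hAqM).1).trans ?_
            refine max_le (ha'norm.trans (by nlinarith)) hAq'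
          · intro k
            refine Fin.lastCases ?_ ?_ k
            · rw [Fin.snoc_last]
              refine hA.trans ?_
              exact mul_le_mul_of_nonneg_right (le_max_right _ _) hNf0
            · intro k'
              rw [Fin.snoc_castSucc]
              refine (ha'coord k').trans ?_
              exact mul_le_mul_of_nonneg_right (le_max_left _ _) hNf0

end Closed

section Operator

variable [IsUltrametricDist L] {I : Type*} [Nonempty I]

lemma lin_zero {x : I → L} {u' : (I → L) → I → L} (hu' : IsLinearOn u' (cBall x)) :
    u' 0 = 0 := by
  have h := hu'.2 (0 : L) 0 (mem_MX_iff.1 (MX x).zero_mem)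
  simpa using h

lemma lin_sub {x : I → L} {u' : (I → L) → I → L} (hu' : IsLinearOn u' (cBall x))
    {f g : I → L} (hf : f ∈ cBall x) (hg : g ∈ cBall x) :
    u' (f - g) = u' f - u' g := by
  have hng : (-1 : L) • g ∈ cBall x := mem_MX_iff.1 (Submodule.smul_mem (MX x) _ (mem_MX_iff.2 hg))
  have h1 : f - g = f + (-1 : L) • g := by
    rw [neg_one_smul]; abel
  rw [h1, hu'.1 f hf _ hng, hu'.2 (-1 : L) g hg, neg_one_smul]
  abel

lemma lin_sum {x : I → L} {u' : (I → L) → I → L} (hu' : IsLinearOn u' (cBall x))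
    {κ : Type*} (t : Finset κ) (w : κ → I → L) (hw : ∀ k ∈ t, w k ∈ cBall x) :
    u' (∑ k ∈ t, w k) = ∑ k ∈ t, u' (w k) := by
  induction t using Finset.induction_on with
  | empty => simpa using lin_zero hu'
  | @insert b t hb ih =>
      rw [Finset.sum_insert hb, Finset.sum_insert hb]
      have h1 : w b ∈ cBall x := hw b (Finset.mem_insert_self b t)
      have h2 : (∑ k ∈ t, w k) ∈ cBall x := by
        refine mem_MX_iff.1 (Submodule.sum_mem (MX x) fun k hk => ?_)
        exact mem_MX_iff.2 (hw k (Finset.mem_insert_of_mem hk))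
      rw [hu'.1 _ h1 _ h2, ih fun k hk => hw k (Finset.mem_insert_of_mem hk)]

lemma lin_lincomb {x : I → L} {u' : (I → L) → I → L} (hu' : IsLinearOn u' (cBall x))
    {κ : Type*} (t : Finset κ) (a : κ → L) (w : κ → I → L)
    (hw : ∀ k ∈ t, w k ∈ cBall x) :
    u' (∑ k ∈ t, a k • w k) = ∑ k ∈ t, a k • u' (w k) := by
  rw [lin_sum hu' t (fun k => a k • w k)
    (fun k hk => mem_MX_iff.1 (Submodule.smul_mem (MX x) _ (mem_MX_iff.2 (hw k hk))))]
  exact Finset.sum_congr rfl fun k hk => hu'.2 (a k) (w k) (hw k hk)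

/-- Uniform row decay: the key consequence of complete continuity. -/
lemma row_decay [CompleteSpace L] {x : I → L} (hx0 : ∀ i, x i ≠ 0)
    {u : (I → L) → I → L}
    (hlin : IsLinearOn u (cBall x))
    (hmaps : ∀ f ∈ cBall x, u f ∈ cBall x)
    (hcont : ∃ C : ℝ, ∀ f ∈ cBall x, normB x (u f) ≤ C * normB x f)
    (hcc : CompletelyContinuousOn u x) :
    ∀ δ : ℝ, 0 < δ → ∃ J : Set I, J.Finite ∧
      ∀ j i, i ∉ J → ‖u (bx x j) i‖ ≤ δ * ‖x i‖ := by
  intro δ hδ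
  obtain ⟨C, hC⟩ := hcont
  set C₀ : ℝ := max C 1 with hC₀def
  have hC₀1 : (1:ℝ) ≤ C₀ := le_max_right _ _
  have hC₀pos : (0:ℝ) < C₀ := lt_of_lt_of_le one_pos hC₀1
  have hC₀ : ∀ f ∈ cBall x, normB x (u f) ≤ C₀ * normB x f := fun f hf =>
    (hC f hf).trans (mul_le_mul_of_nonneg_right (le_max_left _ _) (normB_nonneg x f))
  obtain ⟨u', hu'lin, -, hu'rank, hu'approx⟩ := hcc (δ/2) (by positivity)
  -- the kernel of `u'` on `cBall x`
  set Ks : Submodule L (I → L) :=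
    { carrier := {f | f ∈ cBall x ∧ u' f = 0}
      zero_mem' := ⟨mem_MX_iff.1 (MX x).zero_mem, lin_zero hu'lin⟩
      add_mem' := by
        rintro f g ⟨hf, hf0⟩ ⟨hg, hg0⟩
        refine ⟨mem_MX_iff.1 (Submodule.add_mem (MX x) (mem_MX_iff.2 hf) (mem_MX_iff.2 hg)), ?_⟩
        rw [hu'lin.1 f hf g hg, hf0, hg0, add_zero]
      smul_mem' := by
        rintro c f ⟨hf, hf0⟩
        refine ⟨mem_MX_iff.1 (Submodule.smul_mem (MX x) c (mem_MX_iff.2 hf)), ?_⟩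
        rw [hu'lin.2 c f hf, hf0, smul_zero] } with hKsdef
  have hKsM : Ks ≤ MX x := fun f hf => mem_MX_iff.2 hf.1
  have hKs_small : ∀ f ∈ Ks, normB x (u f) ≤ δ/2 * normB x f := by
    rintro f ⟨hf, hf0⟩
    have h := hu'approx f hf
    rwa [hf0, sub_zero] at h
  -- a finite spanning set modulo `Ks`
  obtain ⟨G, hGfd, hGmaps⟩ := hu'rank
  have hspan : ∃ s : Finset (I → L), (↑s : Set (I → L)) ⊆ (MX x : Set (I → L)) ∧
      ∀ f ∈ MX x, f ∈ Ks ⊔ Submodule.span L (↑s : Set (I → L)) := by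
    classical
    set Im : Set (I → L) := u' '' cBall x with hIm
    set W : Submodule L (I → L) := Submodule.span L Im with hW
    have hWG : W ≤ G := Submodule.span_le.2 (by rintro _ ⟨f, hf, rfl⟩; exact hGmaps f hf)
    haveI : FiniteDimensional L W := Submodule.finiteDimensional_of_le hWG
    set b := Module.finBasis L ↥W with hb
    have hTk : ∀ k, ∃ T : Finset (I → L), (↑T : Set (I → L)) ⊆ Im ∧
        ((b k : ↥W) : I → L) ∈ Submodule.span L (↑T : Set (I → L)) :=
      fun k => Submodule.mem_span_finite_of_mem_span (b k).2
    choose T hTIm hTmem using hTk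
    set Tb : Finset (I → L) := Finset.univ.biUnion T with hTb
    have hTbIm : ∀ t ∈ Tb, t ∈ Im := by
      intro t ht
      rw [hTb, Finset.mem_biUnion] at ht
      obtain ⟨k, -, hk⟩ := ht
      exact hTIm k hk
    have hWTb : W ≤ Submodule.span L (↑Tb : Set (I → L)) := by
      intro z hz
      have hrepr := b.sum_repr ⟨z, hz⟩
      have hz2 : z = ∑ k, ((b.repr ⟨z, hz⟩) k) • ((b k : ↥W) : I → L) := by
        have h3 := congrArg (fun (w : ↥W) => (w : I → L)) hrepr
        simp only [Submodule.coe_sum, Submodule.coe_smul] at h3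
        exact h3.symm
      rw [hz2]
      refine Submodule.sum_mem _ fun k _ => Submodule.smul_mem _ _ ?_
      refine Submodule.span_mono ?_ (hTmem k)
      exact_mod_cast Finset.coe_subset.2 (Finset.subset_biUnion_of_mem T (Finset.mem_univ k))
    -- choose preimages
    have hTpre : ∀ t ∈ Tb, ∃ w ∈ cBall x, u' w = t := fun t ht => hTbIm t ht
    set pre : (I → L) → (I → L) := fun t =>
      if h : ∃ w ∈ cBall x, u' w = t then h.choose else 0 with hpre
    have hpre_mem : ∀ t ∈ Tb, pre t ∈ cBall x := by
      intro t ht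
      have h := hTpre t ht
      simp only [hpre, dif_pos h]
      exact h.choose_spec.1
    have hpre_eq : ∀ t ∈ Tb, u' (pre t) = t := by
      intro t ht
      have h := hTpre t ht
      simp only [hpre, dif_pos h]
      exact h.choose_spec.2
    refine ⟨Tb.image pre, ?_, ?_⟩
    · intro w hw
      simp only [Finset.coe_image, Set.mem_image, Finset.mem_coe] at hw
      obtain ⟨t, ht, rfl⟩ := hw
      exact (mem_MX_iff.2 (hpre_mem t ht) : pre t ∈ MX x)
    · intro f hf
      have hfim : u' f ∈ W := Submodule.subset_span ⟨f, mem_MX_iff.1 hf, rfl⟩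
      have h4 := hWTb hfim
      rw [Submodule.mem_span_finset] at h4
      obtain ⟨r, -, hr⟩ := h4
      set g : I → L := ∑ t ∈ Tb, r t • pre t with hg
      have hgC : g ∈ cBall x := by
        refine mem_MX_iff.1 (Submodule.sum_mem (MX x) fun t ht => ?_)
        exact Submodule.smul_mem _ _ (mem_MX_iff.2 (hpre_mem t ht))
      have hgspan : g ∈ Submodule.span L (↑(Tb.image pre) : Set (I → L)) := by
        refine Submodule.sum_mem _ fun t ht => Submodule.smul_mem _ _ ?_
        refine Submodule.subset_span ?_
        simp only [Finset.coe_image, Set.mem_image, Finset.mem_coe]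
        exact ⟨t, ht, rfl⟩
      have hu'g : u' g = u' f := by
        rw [hg, lin_lincomb hu'lin Tb r pre hpre_mem, ← hr]
        exact Finset.sum_congr rfl fun t ht => by rw [hpre_eq t ht]
      have hfg : f - g ∈ Ks := by
        refine ⟨mem_MX_iff.1 (Submodule.sub_mem (MX x) hf
          (mem_MX_iff.2 hgC)), ?_⟩
        rw [lin_sub hu'lin (mem_MX_iff.1 hf) hgC, hu'g, sub_self]
      have h5 : f = (f - g) + g := by abel
      rw [h5]
      exact Submodule.add_mem _ (Submodule.mem_sup_left hfg) (Submodule.mem_sup_right hgspan)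
  obtain ⟨s, hsM, hSP⟩ := hspan
  -- pass to the closure of Ks
  set Kc := closureK x hx0 Ks with hKc
  have hKcM : IsNClosed x Kc := closureK_isNClosed hx0 Ks
  have hKsKc : Ks ≤ Kc := by
    intro f hf
    exact closureK_le (Submodule.mem_inf.2 ⟨hf, mem_MX_iff.2 hf.1⟩)
  have hSPc : ∀ f ∈ MX x, f ∈ Kc ⊔ Submodule.span L (↑s : Set (I → L)) :=
    fun f hf => (sup_le_sup_right hKsKc _) (hSP f hf)
  -- smallness extends to the closure, pointwise
  have hKc_small : ∀ f ∈ Kc, ∀ i, ‖u f i‖ ≤ δ/2 * normB x f * ‖x i‖ := by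
    rintro f ⟨hfM, happ⟩ i
    have hle : ∀ (A B : ℝ), (∀ η : ℝ, 0 < η → A ≤ B + η) → A ≤ B := fun A B h =>
      le_of_forall_sub_le fun ε hε => by linarith [h ε hε]
    refine hle _ _ ?_
    intro η hη
    set D : ℝ := (C₀ + δ/2) * (‖x i‖ + 1) with hD
    have hDnn : 0 ≤ D := by
      have : (0:ℝ) < C₀ + δ/2 := by linarith
      positivity
    have hDpos : 0 < D + 1 := by linarith
    set e : ℝ := η / (D + 1) with he
    have hε₂pos : 0 < e := by positivity
    have heD : e * (D + 1) = η := div_mul_cancel₀ _ hDpos.ne'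
    obtain ⟨g, hgmem, hgd⟩ := happ e hε₂pos
    have hgKs : g ∈ Ks := (Submodule.mem_inf.1 hgmem).1
    have hgM : g ∈ MX x := (Submodule.mem_inf.1 hgmem).2
    have hfgM : f - g ∈ MX x := Submodule.sub_mem _ hfM hgM
    have hsplit : u f = u g + u (f - g) := by
      have h7 := hlin.1 g (mem_MX_iff.1 hgM) (f - g) (mem_MX_iff.1 hfgM)
      have h8 : g + (f - g) = f := by abel
      rw [h8] at h7
      exact h7
    have hug : u g ∈ cBall x := hmaps g (mem_MX_iff.1 hgM)
    have hufg : u (f - g) ∈ cBall x := hmaps _ (mem_MX_iff.1 hfgM)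
    have hxi : (0:ℝ) ≤ ‖x i‖ := norm_nonneg _
    have hNf : 0 ≤ normB x f := normB_nonneg x f
    have hb1 : ‖u g i‖ ≤ (δ/2 * (normB x f + e)) * ‖x i‖ := by
      refine (norm_le_normB hx0 hug.1 i).trans ?_
      refine mul_le_mul_of_nonneg_right ?_ hxi
      refine (hKs_small g hgKs).trans ?_
      refine mul_le_mul_of_nonneg_left ?_ (by positivity)
      have h10 : g = f - (f - g) := by abel
      rw [h10]
      refine (normB_sub_le hx0 (mem_MX_iff.1 hfM).1 (mem_MX_iff.1 hfgM).1).trans ?_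
      exact max_le (by linarith) (by linarith [hgd.le])
    have hb2 : ‖u (f - g) i‖ ≤ (C₀ * e) * ‖x i‖ := by
      refine (norm_le_normB hx0 hufg.1 i).trans ?_
      refine mul_le_mul_of_nonneg_right ?_ hxi
      refine (hC₀ _ (mem_MX_iff.1 hfgM)).trans ?_
      exact mul_le_mul_of_nonneg_left hgd.le hC₀pos.le
    have hmax : ‖u f i‖ ≤ max ((δ/2 * (normB x f + e)) * ‖x i‖) ((C₀ * e) * ‖x i‖) := by
      rw [hsplit, Pi.add_apply]
      exact (IsUltrametricDist.norm_add_le_max _ _).trans (max_le_max hb1 hb2)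
    refine hmax.trans ?_
    have h11 : δ/2 * ‖x i‖ ≤ D := by rw [hD]; nlinarith
    have h12 : C₀ * ‖x i‖ ≤ D := by rw [hD]; nlinarith
    have h13 : e * D ≤ η := by nlinarith
    have h14 : e * (δ/2 * ‖x i‖) ≤ e * D := mul_le_mul_of_nonneg_left h11 hε₂pos.le
    have h15 : e * (C₀ * ‖x i‖) ≤ e * D := mul_le_mul_of_nonneg_left h12 hε₂pos.le
    have hpos3 : (0:ℝ) ≤ δ/2 * normB x f * ‖x i‖ :=
      mul_nonneg (mul_nonneg (by linarith) hNf) hxi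
    refine max_le (by nlinarith [h13, h14, hpos3]) (by nlinarith [h13, h15, hpos3])
  -- apply the almost-orthogonal projection
  obtain ⟨m, q, KC, hKC0, hqM, hmain⟩ :=
    almost_projection hx0 s hsM Kc hKcM hSPc 2 one_lt_two
  have hKC1pos : (0:ℝ) < 2 * (KC + 1) := by linarith
  set δ₂ : ℝ := δ / (2 * (KC + 1)) with hδ₂
  have hδ₂pos : 0 < δ₂ := div_pos hδ hKC1pos
  set J : Set I := ⋃ k : Fin m, {i | δ₂ * ‖x i‖ < ‖u (q k) i‖} with hJ
  have hJfin : J.Finite :=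
    Set.finite_iUnion fun k => (hmaps (q k) (mem_MX_iff.1 (hqM k))).2 δ₂ hδ₂pos
  refine ⟨J, hJfin, ?_⟩
  intro j i hiJ
  obtain ⟨a, haK, hanorm, hacoord⟩ := hmain (bx x j) (bx_mem_MX x j)
  rw [normB_bx hx0 j] at hanorm hacoord
  set w : I → L := ∑ k, a k • q k with hw
  have hwM : w ∈ MX x := Submodule.sum_mem _ fun k _ => Submodule.smul_mem _ _ (hqM k)
  have hgM : bx x j - w ∈ MX x := Submodule.sub_mem _ (bx_mem_MX x j) hwM
  have hsplit : u (bx x j) = u (bx x j - w) + u w := by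
    have h7 := hlin.1 (bx x j - w) (mem_MX_iff.1 hgM) w (mem_MX_iff.1 hwM)
    have h8 : (bx x j - w) + w = bx x j := by abel
    rw [h8] at h7
    exact h7
  have hb1 : ‖u (bx x j - w) i‖ ≤ δ * ‖x i‖ := by
    refine (hKc_small _ haK i).trans ?_
    refine mul_le_mul_of_nonneg_right ?_ (norm_nonneg _)
    have h9 : normB x (bx x j - w) ≤ 2 := by
      refine (normB_sub_le hx0 (mem_MX_iff.1 (bx_mem_MX x j)).1 (mem_MX_iff.1 hwM).1).trans ?_
      refine max_le (by rw [normB_bx hx0 j]; norm_num) (by linarith)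
    calc δ/2 * normB x (bx x j - w) ≤ δ/2 * 2 :=
          mul_le_mul_of_nonneg_left h9 (by positivity)
      _ = δ := by ring
  have hb2 : ‖u w i‖ ≤ δ * ‖x i‖ := by
    have h10 : u w = ∑ k, a k • u (q k) :=
      lin_lincomb hlin Finset.univ a q (fun k _ => mem_MX_iff.1 (hqM k))
    rw [h10, Finset.sum_apply]
    have hbound : ∀ k ∈ (Finset.univ : Finset (Fin m)),
        ‖(a k • u (q k)) i‖ ≤ KC * δ₂ * ‖x i‖ := by
      intro k _
      rw [Pi.smul_apply, norm_smul]
      have hk1 : ‖a k‖ ≤ KC := by simpa using hacoord k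
      have hk2 : ‖u (q k) i‖ ≤ δ₂ * ‖x i‖ := by
        by_contra hcon
        refine hiJ (Set.mem_iUnion.2 ⟨k, ?_⟩)
        simpa using lt_of_not_ge hcon
      calc ‖a k‖ * ‖u (q k) i‖ ≤ KC * (δ₂ * ‖x i‖) :=
            mul_le_mul hk1 hk2 (norm_nonneg _) hKC0
        _ = KC * δ₂ * ‖x i‖ := by ring
    have hCnn : 0 ≤ KC * δ₂ * ‖x i‖ := by positivity
    refine (IsUltrametricDist.norm_sum_le_of_forall_le_of_nonneg hCnn hbound).trans ?_
    have h16 : KC * δ₂ ≤ δ := by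
      rw [hδ₂, mul_div_assoc']
      rw [div_le_iff₀ hKC1pos]
      nlinarith
    exact mul_le_mul_of_nonneg_right h16 (norm_nonneg _)
  rw [hsplit, Pi.add_apply]
  exact (IsUltrametricDist.norm_add_le_max _ _).trans (max_le hb1 hb2)

end Operator

section Det

variable [IsUltrametricDist L] {I : Type*} [Nonempty I]

lemma matrixOf_eq {x : I → L} {u : (I → L) → I → L} (i j : I) :
    matrixOf u x i j = u (bx x j) i / x i := by
  rw [matrixOf, bx_def]

lemma norm_sign_mul {S : Finset I} (σ : Equiv.Perm {i // i ∈ S}) (z : L) :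
    ‖((Equiv.Perm.sign σ : ℤ) : L) * z‖ = ‖z‖ := by
  rcases Int.units_eq_one_or (Equiv.Perm.sign σ) with h | h <;> rw [h] <;> push_cast <;>
    simp [norm_neg]

/-- Existence of the Fredholm determinant for a completely continuous operator. -/
lemma summable_fredholm [CompleteSpace L] {x : I → L} (hx0 : ∀ i, x i ≠ 0)
    {u : (I → L) → I → L}
    (hlin : IsLinearOn u (cBall x))
    (hmaps : ∀ f ∈ cBall x, u f ∈ cBall x)
    (hcont : ∃ C : ℝ, ∀ f ∈ cBall x, normB x (u f) ≤ C * normB x f)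
    (hcc : CompletelyContinuousOn u x) (n : ℕ) :
    Summable (fun S : {S : Finset I // S.card = n} => fredholmTerm (matrixOf u x) S.1) := by
  classical
  obtain ⟨C, hC⟩ := hcont
  set C₀ : ℝ := max C 1 with hC₀def
  have hC₀1 : (1:ℝ) ≤ C₀ := le_max_right _ _
  have hC₀pos : (0:ℝ) < C₀ := lt_of_lt_of_le one_pos hC₀1
  have hC₀ : ∀ f ∈ cBall x, normB x (u f) ≤ C₀ * normB x f := fun f hf =>
    (hC f hf).trans (mul_le_mul_of_nonneg_right (le_max_left _ _) (normB_nonneg x f))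
  have hentry : ∀ i j, ‖matrixOf u x i j‖ ≤ C₀ := by
    intro i j
    rw [matrixOf_eq, norm_div, div_le_iff₀ (norm_x_pos hx0 i)]
    have h1 : u (bx x j) ∈ cBall x := hmaps _ (mem_MX_iff.1 (bx_mem_MX x j))
    refine (norm_le_normB hx0 h1.1 i).trans ?_
    refine mul_le_mul_of_nonneg_right ?_ (norm_nonneg _)
    refine (hC₀ _ (mem_MX_iff.1 (bx_mem_MX x j))).trans ?_
    rw [normB_bx hx0 j, mul_one]
  rw [summable_iff_vanishing]
  intro e he
  obtain ⟨ε, hε, hball⟩ := Metric.mem_nhds_iff.1 he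
  set δ : ℝ := (ε/2) / C₀ ^ n with hδdef
  have hδpos : 0 < δ := by positivity
  obtain ⟨J, hJfin, hJ⟩ := row_decay hx0 hlin hmaps ⟨C, hC⟩ hcc δ hδpos
  have hrow : ∀ j i, i ∉ J → ‖matrixOf u x i j‖ ≤ δ := by
    intro j i hi
    rw [matrixOf_eq, norm_div, div_le_iff₀ (norm_x_pos hx0 i)]
    exact hJ j i hi
  -- the finitely many bad subsets
  have hbadfin : {S : {S : Finset I // S.card = n} | S.1 ⊆ hJfin.toFinset}.Finite := by
    have h2 : ((fun S : {S : Finset I // S.card = n} => S.1) ''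
        {S | S.1 ⊆ hJfin.toFinset}).Finite := by
      refine Set.Finite.subset hJfin.toFinset.powerset.finite_toSet ?_
      rintro _ ⟨S, hS, rfl⟩
      simpa [Finset.mem_powerset] using hS
    exact Set.Finite.of_finite_image h2 (fun a _ b _ h => Subtype.val_injective h)
  refine ⟨hbadfin.toFinset, ?_⟩
  intro t ht
  refine hball ?_
  rw [Metric.mem_ball, dist_zero_right]
  have hhalf : ∀ S ∈ t, ‖fredholmTerm (matrixOf u x) S.1‖ ≤ ε/2 := by
    intro S hSt
    have hSbad : ¬ (S.1 ⊆ hJfin.toFinset) := by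
      intro hsub
      have : S ∈ hbadfin.toFinset := by
        rw [Set.Finite.mem_toFinset]
        exact hsub
      exact (Finset.disjoint_left.1 ht hSt) this
    obtain ⟨i₀, hi₀S, hi₀J⟩ := Finset.not_subset.1 hSbad
    rw [Set.Finite.mem_toFinset] at hi₀J
    rw [fredholmTerm]
    refine IsUltrametricDist.norm_sum_le_of_forall_le_of_nonneg (by positivity) ?_
    intro σ _
    rw [norm_sign_mul, norm_prod]
    set i₀' : {i // i ∈ S.1} := ⟨i₀, hi₀S⟩ with hi₀'
    rw [← Finset.mul_prod_erase Finset.univ _ (Finset.mem_univ i₀')]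
    have hfirst : ‖matrixOf u x i₀'.1 (σ i₀').1‖ ≤ δ := hrow _ _ hi₀J
    have hrest : ∏ i ∈ Finset.univ.erase i₀', ‖matrixOf u x i.1 (σ i).1‖ ≤
        C₀ ^ ((Finset.univ.erase i₀').card) := by
      rw [← Finset.prod_const]
      exact Finset.prod_le_prod (fun i _ => norm_nonneg _) (fun i _ => hentry _ _)
    calc ‖matrixOf u x i₀'.1 (σ i₀').1‖ * ∏ i ∈ Finset.univ.erase i₀', ‖matrixOf u x i.1 (σ i).1‖
        ≤ δ * C₀ ^ ((Finset.univ.erase i₀').card) := by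
          refine mul_le_mul hfirst hrest (Finset.prod_nonneg fun i _ => norm_nonneg _) hδpos.le
      _ ≤ δ * C₀ ^ n := by
          refine mul_le_mul_of_nonneg_left ?_ hδpos.le
          refine pow_le_pow_right₀ hC₀1 ?_
          calc (Finset.univ.erase i₀').card ≤ Finset.univ.card :=
                Finset.card_le_card (Finset.erase_subset _ _)
            _ = S.1.card := by rw [Finset.card_univ, Fintype.card_coe]
            _ = n := S.2
      _ = ε/2 := by
          rw [hδdef, div_mul_cancel₀ _ (by positivity : (C₀:ℝ) ^ n ≠ 0)]
  calc ‖∑ S ∈ t, fredholmTerm (matrixOf u x) S.1‖ ≤ ε/2 :=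
        IsUltrametricDist.norm_sum_le_of_forall_le_of_nonneg (by positivity) hhalf
    _ < ε := by linarith

end Det

section Equality

variable [IsUltrametricDist L] {I : Type*} [Nonempty I]

lemma matrixOf_y_eq {x y : I → L} (hx0 : ∀ i, x i ≠ 0) (hy0 : ∀ i, y i ≠ 0)
    {u : (I → L) → I → L} (hlin : IsLinearOn u (cBall x)) (i j : I) :
    matrixOf u y i j = ((y j / x j) * (x i / y i)) * matrixOf u x i j := by
  have hvec : (fun k => if k = j then y j else 0) = (y j / x j) • bx x j := by
    funext k
    by_cases h : k = j
    · subst h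
      rw [Pi.smul_apply, bx_def]
      simp [div_mul_cancel₀ _ (hx0 k)]
    · simp [bx_def, h]
  rw [matrixOf, hvec, hlin.2 _ _ (mem_MX_iff.1 (bx_mem_MX x j)), matrixOf_eq]
  rw [Pi.smul_apply, smul_eq_mul]
  have hxj := hx0 j; have hyi := hy0 i; have hxi := hx0 i
  field_simp

lemma fredholmTerm_eq {x y : I → L} (hx0 : ∀ i, x i ≠ 0) (hy0 : ∀ i, y i ≠ 0)
    {u : (I → L) → I → L} (hlin : IsLinearOn u (cBall x)) (S : Finset I) :
    fredholmTerm (matrixOf u y) S = fredholmTerm (matrixOf u x) S := by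
  rw [fredholmTerm, fredholmTerm]
  refine Finset.sum_congr rfl fun σ _ => ?_
  congr 1
  calc ∏ i : {i // i ∈ S}, matrixOf u y i.1 (σ i).1
      = ∏ i : {i // i ∈ S},
          (((y (σ i).1 / x (σ i).1) * (x i.1 / y i.1)) * matrixOf u x i.1 (σ i).1) :=
        Finset.prod_congr rfl (fun i _ => matrixOf_y_eq hx0 hy0 hlin _ _)
    _ = ((∏ i : {i // i ∈ S}, (y (σ i).1 / x (σ i).1)) *
          ∏ i : {i // i ∈ S}, (x i.1 / y i.1)) * ∏ i : {i // i ∈ S}, matrixOf u x i.1 (σ i).1 := by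
        rw [← Finset.prod_mul_distrib, ← Finset.prod_mul_distrib]
    _ = ∏ i : {i // i ∈ S}, matrixOf u x i.1 (σ i).1 := by
        have hperm : ∏ i : {i // i ∈ S}, (y (σ i).1 / x (σ i).1)
            = ∏ i : {i // i ∈ S}, (y i.1 / x i.1) :=
          Equiv.prod_comp σ (fun i => y i.1 / x i.1)
        rw [hperm, ← Finset.prod_mul_distrib]
        have hone : ∀ i : {i // i ∈ S}, (y i.1 / x i.1) * (x i.1 / y i.1) = 1 := by
          intro i
          rw [div_mul_div_comm, mul_comm (y i.1), div_self (mul_ne_zero (hx0 _) (hy0 _))]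
        rw [Finset.prod_congr rfl (fun i _ => hone i), Finset.prod_const_one, one_mul]

lemma detCoeff_eq {x y : I → L} (hx0 : ∀ i, x i ≠ 0) (hy0 : ∀ i, y i ≠ 0)
    {u : (I → L) → I → L} (hlin : IsLinearOn u (cBall x)) (n : ℕ) :
    detCoeff (matrixOf u y) n = detCoeff (matrixOf u x) n := by
  rw [detCoeff, detCoeff]
  congr 1
  exact tsum_congr fun S => fredholmTerm_eq hx0 hy0 hlin S.1

end Equality

/-- Let `x > y` (entries nonzero), and let `u` be a continuous
`L`-linear completely continuous operator on `𝐜(I,x)` with `u(𝐬(I,y)) ⊆ 𝐬(I,y)`.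
Then the Fredholm determinant `det(1 - su | B(I,y))` exists (all the sums defining its
coefficients converge) and equals `det(1 - su | B(I,x))` as a formal power series. -/
theorem statement_11 {L : Type*} [NontriviallyNormedField L] [CompleteSpace L]
    [IsUltrametricDist L] {I : Type*} [Countable I] [Infinite I]
    (x y : I → L) (hx0 : ∀ i, x i ≠ 0) (hy0 : ∀ i, y i ≠ 0)
    (hxc : cZero x) (hyc : cZero y) (hxy : gtRel x y)
    (u : (I → L) → I → L)
    (hlin : IsLinearOn u (cBall x))
    (hmaps : ∀ f ∈ cBall x, u f ∈ cBall x)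
    (hcont : ∃ C : ℝ, ∀ f ∈ cBall x, normB x (u f) ≤ C * normB x f)
    (hcc : CompletelyContinuousOn u x)
    (hsy : ∀ f ∈ sBall y, u f ∈ sBall y) :
    (∀ n : ℕ,
      Summable (fun S : {S : Finset I // S.card = n} => fredholmTerm (matrixOf u y) S.1)) ∧
    ∀ n : ℕ, detCoeff (matrixOf u y) n = detCoeff (matrixOf u x) n := by
  haveI : Nonempty I := inferInstance
  constructor
  · intro n
    exact (summable_fredholm hx0 hlin hmaps hcont hcc n).congr
      fun S => (fredholmTerm_eq hx0 hy0 hlin S.1).symm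
  · intro n
    exact detCoeff_eq hx0 hy0 hlin n

end FredholmStmt
end
end

section
/- Let b ∈ 𝐜(I) have all entries nonzero, and let v be a continuous E-linear operator on 𝐬(I,b) that is ν^{−1}-semilinear, i.e. v(c^ν · z) = c · v(z) for all c ∈ L and z ∈ 𝐬(I,b), and tight. Then: (1) col_{(i,j)}(v) is independent of j, equal to col_{(i,1)}(v) for every 1 ≤ j ≤ a; and (2) the Fredholm determinant det(1 − sv | B(I_E,b)) = ∑ c_n s^n is defined, and for every n ≥ 0 the valuation v_p(c_n) is at least the sum of the n smallest elements (counted with multiplicity) of the multiset consisting of the numbers col_{(i,1)}(v), i ∈ I, each taken with multiplicity a. -/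
open Filter Topology
open scoped Classical

noncomputable section

namespace FredholmStmt

variable {L : Type*} [NontriviallyNormedField L]

private lemma coe_finset_sum_ereal {ι : Type*} (s : Finset ι) (f : ι → ℝ) :
    ((∑ x ∈ s, f x : ℝ) : EReal) = ∑ x ∈ s, ((f x : ℝ) : EReal) := by
  classical
  induction s using Finset.cons_induction with
  | empty => simp
  | cons a s ha ih => rw [Finset.sum_cons, Finset.sum_cons, EReal.coe_add, ih]

/-- Let `v` be a continuous `E`-linear, `ν⁻¹`-semilinear, tight
operator on `𝐬(I,b)`, with matrix `N` (entries in `E`) in the integral `E`-basis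
`B(I_E,b) = {ζⱼ bᵢ eᵢ}`. Then (1) `col_{(i,j)}(v)` is independent of `j`; and
(2) the Fredholm determinant `det(1 - sv | B(I_E,b)) = ∑ cₙ sⁿ` is defined, and
`v_p(cₙ)` is at least the sum of the `n` smallest elements of the multiset of the
column valuations `{col_w(v)}_{w ∈ I × Fin a}` (which, by (1), is the multiset of the
numbers `col_{(i,1)}(v)`, `i ∈ I`, each with multiplicity `a`). -/
theorem statement_12 {p : ℕ} (hp : p.Prime)
    {L : Type*} [NontriviallyNormedField L] [CompleteSpace L] [IsUltrametricDist L]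
    (hpL : ‖(p : L)‖ = (p : ℝ)⁻¹)
    {I : Type*} [Countable I] [Infinite I]
    (E : Subfield L) (a : ℕ) (ha : 0 < a)
    (ζ : Fin a → L) (hζ0 : ζ ⟨0, ha⟩ = 1) (hζint : ∀ j, ‖ζ j‖ ≤ 1)
    (hbasis : ∀ z : L, ∃! e : Fin a → L, (∀ j, e j ∈ E) ∧ z = ∑ j : Fin a, e j * ζ j)
    (hintbasis : ∀ e : Fin a → L, (∀ j, e j ∈ E) →
      ∀ j, ‖e j‖ ≤ ‖∑ k : Fin a, e k * ζ k‖)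
    (ν : L ≃+* L) (hν : ∀ e ∈ E, ν e = e)
    (b : I → L) (hb0 : ∀ i, b i ≠ 0) (hbc : cZero b)
    (v : (I → L) → I → L)
    (hadd : ∀ z ∈ sBall b, ∀ w ∈ sBall b, v (z + w) = v z + v w)
    (hmaps : ∀ z ∈ sBall b, v z ∈ sBall b)
    (hcont : ∃ C : ℝ, ∀ z ∈ sBall b, normB b (v z) ≤ C * normB b z)
    (hsemi : ∀ (c : L), ∀ z ∈ sBall b, v (fun i => ν c * z i) = fun i => c * v z i)
    (N : I × Fin a → I × Fin a → L) (hNE : ∀ w w', N w w' ∈ E)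
    (hN : ∀ (i' : I) (j' : Fin a) (i : I),
      v (fun k => if k = i' then ζ j' * b i' else 0) i
        = (∑ j : Fin a, N (i, j) (i', j') * ζ j) * b i)
    (htight : ∀ C : ℝ, {w : I × Fin a | colOf p N w < (C : EReal)}.Finite) :
    (∀ (i : I) (j : Fin a), colOf p N (i, j) = colOf p N (i, ⟨0, ha⟩)) ∧
    (∀ n : ℕ, Summable
      (fun S : {S : Finset (I × Fin a) // S.card = n} => fredholmTerm N S.1)) ∧
    ∀ (n : ℕ) (T : Finset (I × Fin a)), T.card = n →
      (∀ w ∈ T, ∀ w' ∉ T, colOf p N w ≤ colOf p N w') →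
      (∑ w ∈ T, colOf p N w) ≤ vpE p (detCoeff N n) := by
  classical
  have hI : Nonempty I := inferInstance
  set j0 : Fin a := ⟨0, ha⟩ with hj0def
  have hFa : Nonempty (Fin a) := ⟨j0⟩
  have hζj0 : ζ j0 = 1 := by rw [hj0def]; exact hζ0
  have hp1 : (1 : ℝ) < (p : ℝ) := by exact_mod_cast hp.one_lt
  have hplog : 0 < Real.log p := Real.log_pos hp1
  have hbpos : ∀ i, 0 < ‖b i‖ := fun i => norm_pos_iff.mpr (hb0 i)
  -- ultrametric bound for sums against the basis
  have hsum_le : ∀ (e : Fin a → L) (B : ℝ), 0 ≤ B → (∀ j, ‖e j‖ ≤ B) →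
      ‖∑ k : Fin a, e k * ζ k‖ ≤ B := by
    intro e B hB h
    refine IsUltrametricDist.norm_sum_le_of_forall_le_of_nonneg hB fun j _ => ?_
    rw [norm_mul]
    calc ‖e j‖ * ‖ζ j‖ ≤ B * 1 := mul_le_mul (h j) (hζint j) (norm_nonneg _) hB
      _ = B := mul_one B
  -- each ζ j has norm one
  have hζ1 : ∀ j, ‖ζ j‖ = 1 := by
    intro j
    refine le_antisymm (hζint j) ?_
    have he : ∀ k, (if k = j then (1:L) else 0) ∈ E := by
      intro k; split_ifs
      · exact E.one_mem
      · exact E.zero_mem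
    have h := hintbasis (fun k => if k = j then (1:L) else 0) he j
    simpa [ite_mul] using h
  -- any ring automorphism fixing E is norm non-increasing
  have hiso : ∀ τ : L ≃+* L, (∀ e ∈ E, τ e = e) → ∀ x : L, ‖τ x‖ ≤ ‖x‖ := by
    intro τ hτ
    have hKex : ∃ K : ℝ, 1 ≤ K ∧ ∀ x : L, ‖τ x‖ ≤ K * ‖x‖ := by
      refine ⟨max 1 (Finset.univ.sup' Finset.univ_nonempty fun j => ‖τ (ζ j)‖),
        le_max_left _ _, fun x => ?_⟩
      obtain ⟨e, ⟨he, hx⟩, -⟩ := hbasis x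
      have hτx : τ x = ∑ j : Fin a, e j * τ (ζ j) := by
        rw [hx, map_sum]
        refine Finset.sum_congr rfl fun j _ => ?_
        rw [map_mul, hτ _ (he j)]
      rw [hτx]
      have hK0 : (0:ℝ) ≤ max 1 (Finset.univ.sup' Finset.univ_nonempty fun j => ‖τ (ζ j)‖) * ‖x‖ :=
        mul_nonneg (le_trans zero_le_one (le_max_left _ _)) (norm_nonneg _)
      refine IsUltrametricDist.norm_sum_le_of_forall_le_of_nonneg hK0 fun j _ => ?_
      rw [norm_mul]
      have h1 : ‖e j‖ ≤ ‖x‖ := by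
        have := hintbasis e he j; rwa [← hx] at this
      have h2 : ‖τ (ζ j)‖ ≤ max 1 (Finset.univ.sup' Finset.univ_nonempty fun j => ‖τ (ζ j)‖) :=
        le_max_of_le_right (Finset.le_sup' (f := fun j => ‖τ (ζ j)‖) (Finset.mem_univ j))
      calc ‖e j‖ * ‖τ (ζ j)‖
          ≤ ‖x‖ * max 1 (Finset.univ.sup' Finset.univ_nonempty fun j => ‖τ (ζ j)‖) :=
            mul_le_mul h1 h2 (norm_nonneg _) (norm_nonneg _)
        _ = _ := mul_comm _ _
    obtain ⟨K, hK1, hKb⟩ := hKex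
    intro x
    rcases eq_or_ne x 0 with rfl | hx0
    · simp
    have hxp : 0 < ‖x‖ := norm_pos_iff.mpr hx0
    by_contra hlt
    push_neg at hlt
    obtain ⟨n, hn⟩ := pow_unbounded_of_one_lt K ((one_lt_div hxp).mpr hlt)
    have h2 : (‖τ x‖ / ‖x‖) ^ n ≤ K := by
      rw [div_pow, div_le_iff₀ (pow_pos hxp n)]
      calc ‖τ x‖ ^ n = ‖τ (x ^ n)‖ := by rw [map_pow, norm_pow]
        _ ≤ K * ‖x ^ n‖ := hKb _
        _ = K * ‖x‖ ^ n := by rw [norm_pow]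
    exact absurd h2 (not_le.mpr hn)
  have hνnorm : ∀ x : L, ‖ν x‖ = ‖x‖ := by
    intro x
    refine le_antisymm (hiso ν hν x) ?_
    have hsymfix : ∀ e ∈ E, ν.symm e = e := by
      intro e he
      conv_lhs => rw [← hν e he]
      exact ν.symm_apply_apply e
    have h := hiso ν.symm hsymfix (ν x)
    rwa [ν.symm_apply_apply] at h
  -- the basis vectors and the column sup-norms
  set g : I × Fin a → (I → L) := fun w k => if k = w.1 then ζ w.2 * b w.1 else 0 with hgdef
  have hgS : ∀ w, g w ∈ sBall b := by
    intro w
    refine ⟨1, fun i => ?_⟩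
    simp only [hgdef]
    split_ifs with h
    · subst h
      rw [norm_mul]
      exact mul_le_mul_of_nonneg_right (hζint w.2) (norm_nonneg _)
    · rw [norm_zero]
      positivity
  have hbddA : ∀ z ∈ sBall b, BddAbove (Set.range fun i => ‖z i‖ / ‖b i‖) := by
    rintro z ⟨C', hC'⟩
    refine ⟨C', ?_⟩
    rintro x ⟨i, rfl⟩
    exact (div_le_iff₀ (hbpos i)).mpr (hC' i)
  have hle_normB : ∀ z ∈ sBall b, ∀ i, ‖z i‖ / ‖b i‖ ≤ normB b z := by
    intro z hz i
    exact le_ciSup (hbddA z hz) i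
  have hnormB_le : ∀ (z : I → L) (C' : ℝ), (∀ i, ‖z i‖ / ‖b i‖ ≤ C') → normB b z ≤ C' :=
    fun z C' h => ciSup_le h
  have hnormB_nonneg : ∀ z ∈ sBall b, 0 ≤ normB b z := by
    intro z hz
    exact le_trans (by positivity) (hle_normB z hz (Classical.arbitrary I))
  set ρ : I × Fin a → ℝ := fun w => normB b (v (g w)) with hρdef
  have hvgS : ∀ w, v (g w) ∈ sBall b := fun w => hmaps _ (hgS w)
  have hρ0 : ∀ w, 0 ≤ ρ w := fun w => hnormB_nonneg _ (hvgS w)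
  have hrow : ∀ (w : I × Fin a) (i : I),
      ‖v (g w) i‖ / ‖b i‖ = ‖∑ j : Fin a, N (i, j) w * ζ j‖ := by
    intro w i
    have h := hN w.1 w.2 i
    have hgw : (fun k => if k = w.1 then ζ w.2 * b w.1 else 0) = g w := by
      simp only [hgdef]
    rw [hgw] at h
    rw [h, norm_mul, mul_div_assoc, div_self (ne_of_gt (hbpos i)), mul_one]
  have hNle : ∀ w' w : I × Fin a, ‖N w' w‖ ≤ ρ w := by
    intro w' w
    have h1 : ‖N w' w‖ ≤ ‖∑ j : Fin a, N (w'.1, j) w * ζ j‖ := by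
      have h := hintbasis (fun j => N (w'.1, j) w) (fun j => hNE _ _) w'.2
      simpa using h
    rw [← hrow w w'.1] at h1
    exact h1.trans (hle_normB _ (hvgS w) w'.1)
  have hρ_le : ∀ (w : I × Fin a) (B : ℝ), 0 ≤ B → (∀ w', ‖N w' w‖ ≤ B) → ρ w ≤ B := by
    intro w B hB h
    refine hnormB_le _ _ fun i => ?_
    rw [hrow w i]
    exact hsum_le _ B hB fun j => h (i, j)
  -- the valuation of a sup-norm
  set vpF : ℝ → EReal :=
    fun r => if r = 0 then (⊤ : EReal) else (((-(Real.log r / Real.log p)) : ℝ) : EReal)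
    with hvpFdef
  have hvpFzero : vpF 0 = ⊤ := by simp [hvpFdef]
  have hvpFpos : ∀ r : ℝ, 0 < r →
      vpF r = (((-(Real.log r / Real.log p)) : ℝ) : EReal) := by
    intro r hr; simp [hvpFdef, ne_of_gt hr]
  have hvpE_norm : ∀ z : L, vpE p z = vpF ‖z‖ := by
    intro z
    rcases eq_or_ne z 0 with rfl | hz
    · simp [vpE, hvpFdef]
    · simp [vpE, hvpFdef, hz, norm_eq_zero]
  have hvpF_anti : ∀ r r' : ℝ, 0 ≤ r → r ≤ r' → vpF r' ≤ vpF r := by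
    intro r r' h0 h
    rcases eq_or_lt_of_le h0 with h0' | h0'
    · have h1 : vpF r = ⊤ := by rw [← h0']; exact hvpFzero
      rw [h1]; exact le_top
    · have hr' : 0 < r' := lt_of_lt_of_le h0' h
      rw [hvpFpos _ h0', hvpFpos _ hr']
      apply EReal.coe_le_coe_iff.mpr
      have hlog : Real.log r ≤ Real.log r' := Real.log_le_log h0' h
      have hd : Real.log r / Real.log p ≤ Real.log r' / Real.log p := by gcongr
      linarith
  have hvpF_strict : ∀ r r' : ℝ, 0 ≤ r → r < r' → vpF r' < vpF r := by
    intro r r' h0 h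
    have hr' : 0 < r' := lt_of_le_of_lt h0 h
    rcases eq_or_lt_of_le h0 with h0' | h0'
    · have h1 : vpF r = ⊤ := by rw [← h0']; exact hvpFzero
      rw [h1, hvpFpos _ hr']
      exact EReal.coe_lt_top _
    · rw [hvpFpos _ h0', hvpFpos _ hr']
      apply EReal.coe_lt_coe_iff.mpr
      have hlog : Real.log r < Real.log r' := Real.log_lt_log h0' h
      have hd : Real.log r / Real.log p < Real.log r' / Real.log p := by gcongr
      linarith
  -- the column valuation is the valuation of the column sup-norm
  have hcol : ∀ w, colOf p N w = vpF (ρ w) := by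
    intro w
    refine le_antisymm ?_ ?_
    · by_contra hlt
      push_neg at hlt
      rcases eq_or_lt_of_le (hρ0 w) with h0 | h0
      · have h1 : vpF (ρ w) = ⊤ := by rw [← h0]; exact hvpFzero
        rw [h1] at hlt
        exact not_top_lt hlt
      · obtain ⟨c', h1, h2⟩ := EReal.exists_between_coe_real hlt
        have hallN : ∀ w', ‖N w' w‖ ≤ Real.exp (-(c' * Real.log p)) := by
          intro w'
          have h3 : (c' : EReal) < vpE p (N w' w) := by
            refine lt_of_lt_of_le h2 ?_
            simp only [colOf]
            exact iInf_le _ w'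
          rcases eq_or_ne (N w' w) 0 with h4 | h4
          · rw [h4, norm_zero]; positivity
          · rw [vpE, if_neg h4] at h3
            have h5 : c' < -(Real.log ‖N w' w‖ / Real.log p) := EReal.coe_lt_coe_iff.mp h3
            have h6 := mul_lt_mul_of_pos_right h5 hplog
            rw [neg_mul, div_mul_cancel₀ _ (ne_of_gt hplog)] at h6
            calc ‖N w' w‖ = Real.exp (Real.log ‖N w' w‖) :=
                  (Real.exp_log (norm_pos_iff.mpr h4)).symm
              _ ≤ Real.exp (-(c' * Real.log p)) := Real.exp_le_exp.mpr (by linarith)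
        have h7 : ρ w ≤ Real.exp (-(c' * Real.log p)) :=
          hρ_le w _ (Real.exp_pos _).le hallN
        rw [hvpFpos _ h0] at h1
        have h9 : -(Real.log (ρ w) / Real.log p) < c' := EReal.coe_lt_coe_iff.mp h1
        have h10 := mul_lt_mul_of_pos_right h9 hplog
        rw [neg_mul, div_mul_cancel₀ _ (ne_of_gt hplog)] at h10
        have h11 : Real.exp (-(c' * Real.log p)) < ρ w := by
          calc Real.exp (-(c' * Real.log p)) < Real.exp (Real.log (ρ w)) :=
                Real.exp_lt_exp.mpr (by linarith)
            _ = ρ w := Real.exp_log h0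
        linarith
    · simp only [colOf]
      refine le_iInf fun w' => ?_
      rw [hvpE_norm]
      exact hvpF_anti _ _ (norm_nonneg _) (hNle w' w)
  -- part (1): the column sup-norms do not depend on j
  have hρj : ∀ (i : I) (j : Fin a), ρ (i, j) = ρ (i, j0) := by
    intro i j
    have hu1 : ‖ν.symm (ζ j)‖ = 1 := by
      rw [← hνnorm (ν.symm (ζ j)), ν.apply_symm_apply, hζ1 j]
    have hgj : (fun k => ν (ν.symm (ζ j)) * (g (i, j0)) k) = g (i, j) := by
      funext k
      rw [ν.apply_symm_apply]
      simp only [hgdef]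
      by_cases h : k = i
      · simp [h, hζj0]
      · simp [h]
    have h1 : v (g (i, j)) = fun k => ν.symm (ζ j) * v (g (i, j0)) k := by
      rw [← hgj]
      exact hsemi (ν.symm (ζ j)) (g (i, j0)) (hgS _)
    show normB b (v (g (i, j))) = normB b (v (g (i, j0)))
    rw [h1]
    simp only [normB]
    congr 1
    funext k
    rw [norm_mul, hu1, one_mul]
  -- boundedness of the column sup-norms
  obtain ⟨C, hC⟩ := hcont
  have hM1 : (1:ℝ) ≤ max C 1 := le_max_right _ _
  have hM0 : (0:ℝ) < max C 1 := lt_of_lt_of_le one_pos hM1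
  have hρM : ∀ w, ρ w ≤ max C 1 := by
    intro w
    have h1 : normB b (g w) ≤ 1 := by
      refine hnormB_le _ _ fun i => ?_
      simp only [hgdef]
      split_ifs with h
      · subst h
        rw [norm_mul, mul_div_assoc, div_self (ne_of_gt (hbpos w.1)), mul_one]
        exact hζint w.2
      · rw [norm_zero, zero_div]; exact zero_le_one
    have h2 : normB b (v (g w)) ≤ C * normB b (g w) := hC _ (hgS w)
    have h3 : 0 ≤ normB b (g w) := hnormB_nonneg _ (hgS w)
    calc ρ w ≤ C * normB b (g w) := h2
      _ ≤ max C 1 * 1 := mul_le_mul (le_max_left _ _) h1 h3 hM0.le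
      _ = max C 1 := mul_one _
  -- tightness in terms of the column sup-norms
  have hfin : ∀ δ : ℝ, 0 < δ → {w : I × Fin a | δ ≤ ρ w}.Finite := by
    intro δ hδ
    refine Set.Finite.subset (htight (-(Real.log δ / Real.log p) + 1)) ?_
    intro w hw
    simp only [Set.mem_setOf_eq] at hw ⊢
    have hρp : 0 < ρ w := lt_of_lt_of_le hδ hw
    rw [hcol w, hvpFpos _ hρp]
    apply EReal.coe_lt_coe_iff.mpr
    have hlog : Real.log δ ≤ Real.log (ρ w) := Real.log_le_log hδ hw
    have hd : Real.log δ / Real.log p ≤ Real.log (ρ w) / Real.log p := by gcongr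
    linarith
  -- the Hadamard-type bound on each term of the Fredholm determinant
  have hterm : ∀ S : Finset (I × Fin a), ‖fredholmTerm N S‖ ≤ ∏ w ∈ S, ρ w := by
    intro S
    rw [fredholmTerm]
    refine IsUltrametricDist.norm_sum_le_of_forall_le_of_nonneg
      (Finset.prod_nonneg fun w _ => hρ0 w) fun σ _ => ?_
    rw [norm_mul]
    have hsgn : ∀ u : ℤˣ, ‖((u : ℤ) : L)‖ ≤ 1 := by
      intro u; rcases Int.units_eq_one_or u with h | h <;> rw [h] <;> simp
    refine le_trans (mul_le_mul_of_nonneg_right (hsgn _) (norm_nonneg _)) ?_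
    rw [one_mul]
    calc ‖∏ i : {i // i ∈ S}, N i.1 (σ i).1‖ = ∏ i : {i // i ∈ S}, ‖N i.1 (σ i).1‖ := by
          rw [norm_prod]
      _ ≤ ∏ i : {i // i ∈ S}, ρ (σ i).1 :=
          Finset.prod_le_prod (fun _ _ => norm_nonneg _) (fun i _ => hNle _ _)
      _ = ∏ i : {i // i ∈ S}, ρ i.1 := Equiv.prod_comp σ (fun i => ρ i.1)
      _ = ∏ w ∈ S, ρ w := Finset.prod_coe_sort S ρ
  -- part (2a): summability
  have hsummable : ∀ n : ℕ, Summable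
      (fun S : {S : Finset (I × Fin a) // S.card = n} => fredholmTerm N S.1) := by
    intro n
    apply NonarchimedeanAddGroup.summable_of_tendsto_cofinite_zero
    refine Metric.tendsto_nhds.mpr fun ε hε => ?_
    rw [Filter.eventually_cofinite]
    have hδ : 0 < ε / max C 1 ^ n := div_pos hε (pow_pos hM0 n)
    have hsub : {S : {S : Finset (I × Fin a) // S.card = n} |
          ¬ dist (fredholmTerm N S.1) 0 < ε}
        ⊆ (fun S : {S : Finset (I × Fin a) // S.card = n} => S.1) ⁻¹'
            ↑((hfin _ hδ).toFinset.powerset) := by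
      intro S hS
      simp only [Set.mem_setOf_eq, dist_zero_right, not_lt] at hS
      have hεle : ε ≤ ∏ w ∈ S.1, ρ w := hS.trans (hterm S.1)
      simp only [Set.mem_preimage, Finset.coe_powerset, Set.mem_setOf_eq,
        Finset.mem_coe, Finset.mem_powerset]
      intro w hw
      have hwS : w ∈ S.1 := Finset.mem_coe.mp hw
      simp only [Finset.mem_coe, Set.Finite.mem_toFinset, Set.mem_setOf_eq]
      have hsplit : ∏ x ∈ S.1, ρ x = ρ w * ∏ x ∈ S.1.erase w, ρ x :=
        (Finset.mul_prod_erase S.1 ρ hwS).symm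
      have herase : ∏ x ∈ S.1.erase w, ρ x ≤ max C 1 ^ n := by
        calc ∏ x ∈ S.1.erase w, ρ x ≤ ∏ _x ∈ S.1.erase w, max C 1 :=
              Finset.prod_le_prod (fun x _ => hρ0 x) (fun x _ => hρM x)
          _ = max C 1 ^ (S.1.erase w).card := by rw [Finset.prod_const]
          _ ≤ max C 1 ^ n := by
              refine pow_le_pow_right₀ hM1 ?_
              calc (S.1.erase w).card ≤ S.1.card := Finset.card_erase_le
                _ = n := S.2
      have hεw : ε ≤ ρ w * max C 1 ^ n := by
        calc ε ≤ ∏ x ∈ S.1, ρ x := hεle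
          _ = ρ w * ∏ x ∈ S.1.erase w, ρ x := hsplit
          _ ≤ ρ w * max C 1 ^ n := mul_le_mul_of_nonneg_left herase (hρ0 w)
      exact (div_le_iff₀ (pow_pos hM0 n)).mpr hεw
    refine Set.Finite.subset (Set.Finite.preimage ?_ (Finset.finite_toSet _)) hsub
    exact Set.injOn_of_injective Subtype.val_injective
  refine ⟨fun i j => by rw [hcol, hcol, hρj i j], hsummable, ?_⟩
  -- part (2b): the valuation bound
  intro n T hTcard hTmin
  have hmin' : ∀ w ∈ T, ∀ w' ∉ T, ρ w' ≤ ρ w := by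
    intro w hw w' hw'
    have h1 := hTmin w hw w' hw'
    rw [hcol, hcol] at h1
    by_contra hlt
    push_neg at hlt
    exact absurd h1 (not_le.mpr (hvpF_strict _ _ (hρ0 w) hlt))
  have hdet : ‖detCoeff N n‖ ≤ ∏ w ∈ T, ρ w := by
    have hP0 : 0 ≤ ∏ w ∈ T, ρ w := Finset.prod_nonneg fun w _ => hρ0 w
    have hSP : ∀ S : Finset (I × Fin a), S.card = n → (∏ w ∈ S, ρ w) ≤ ∏ w ∈ T, ρ w := by
      intro S hS
      have hcardeq : (S \ T).card = (T \ S).card := by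
        have h1 := Finset.card_sdiff_add_card_inter S T
        have h2 := Finset.card_sdiff_add_card_inter T S
        rw [Finset.inter_comm] at h2
        omega
      have key : (∏ w ∈ S \ T, ρ w) ≤ ∏ w ∈ T \ S, ρ w := by
        calc (∏ w ∈ S \ T, ρ w) = ∏ x : {x // x ∈ S \ T}, ρ x.1 :=
              (Finset.prod_coe_sort _ _).symm
          _ ≤ ∏ x : {x // x ∈ S \ T}, ρ ((Finset.equivOfCardEq hcardeq) x).1 := by
              refine Finset.prod_le_prod (fun _ _ => hρ0 _) (fun x _ => ?_)
              have hx : x.1 ∉ T := (Finset.mem_sdiff.mp x.2).2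
              have he : ((Finset.equivOfCardEq hcardeq) x).1 ∈ T :=
                (Finset.mem_sdiff.mp ((Finset.equivOfCardEq hcardeq) x).2).1
              exact hmin' _ he _ hx
          _ = ∏ y : {x // x ∈ T \ S}, ρ y.1 :=
              Equiv.prod_comp (Finset.equivOfCardEq hcardeq) (fun y => ρ y.1)
          _ = ∏ w ∈ T \ S, ρ w := Finset.prod_coe_sort _ _
      calc (∏ w ∈ S, ρ w) = (∏ w ∈ S ∩ T, ρ w) * ∏ w ∈ S \ T, ρ w :=
            (Finset.prod_inter_mul_prod_diff S T ρ).symm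
        _ ≤ (∏ w ∈ S ∩ T, ρ w) * ∏ w ∈ T \ S, ρ w :=
            mul_le_mul_of_nonneg_left key (Finset.prod_nonneg fun _ _ => hρ0 _)
        _ = (∏ w ∈ T ∩ S, ρ w) * ∏ w ∈ T \ S, ρ w := by rw [Finset.inter_comm]
        _ = ∏ w ∈ T, ρ w := Finset.prod_inter_mul_prod_diff T S ρ
    rw [detCoeff, norm_mul]
    have h1 : ‖(-1 : L) ^ n‖ = 1 := by rw [norm_pow, norm_neg, norm_one, one_pow]
    rw [h1, one_mul]
    exact IsUltrametricDist.norm_tsum_le_of_forall_le_of_nonneg hP0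
      fun S => (hterm S.1).trans (hSP S.1 S.2)
  by_cases hz : ∃ w ∈ T, ρ w = 0
  · obtain ⟨w₀, hw₀, h0⟩ := hz
    have hdet0 : detCoeff N n = 0 := by
      have hP0' : ∏ w ∈ T, ρ w = 0 := Finset.prod_eq_zero hw₀ h0
      rw [hP0'] at hdet
      exact norm_le_zero_iff.mp hdet
    simp only [vpE, if_pos hdet0]
    exact le_top
  · push_neg at hz
    have hpos : ∀ w ∈ T, 0 < ρ w := fun w hw => lt_of_le_of_ne (hρ0 w) (Ne.symm (hz w hw))
    have hLHS : (∑ w ∈ T, colOf p N w)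
        = (((∑ w ∈ T, -(Real.log (ρ w) / Real.log p)) : ℝ) : EReal) := by
      rw [coe_finset_sum_ereal]
      refine Finset.sum_congr rfl fun w hw => ?_
      rw [hcol w, hvpFpos _ (hpos w hw)]
    have hsumlog : (∑ w ∈ T, -(Real.log (ρ w) / Real.log p))
        = -(Real.log (∏ w ∈ T, ρ w) / Real.log p) := by
      rw [Real.log_prod (fun w hw => ne_of_gt (hpos w hw)), Finset.sum_div]
      exact Finset.sum_neg_distrib _
    rw [hLHS, hsumlog]
    rcases eq_or_ne (detCoeff N n) 0 with h0 | h0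
    · simp only [vpE, if_pos h0]; exact le_top
    · simp only [vpE, if_neg h0]
      apply EReal.coe_le_coe_iff.mpr
      have hdpos : 0 < ‖detCoeff N n‖ := norm_pos_iff.mpr h0
      have hlog : Real.log ‖detCoeff N n‖ ≤ Real.log (∏ w ∈ T, ρ w) :=
        Real.log_le_log hdpos hdet
      have hd : Real.log ‖detCoeff N n‖ / Real.log p
          ≤ Real.log (∏ w ∈ T, ρ w) / Real.log p := by gcongr
      linarith

end FredholmStmt
end
end

section
/- Let f: A → V be a continuous L-linear map of Banach spaces with f(A₀) ⊆ V₀, and let f̄: Ā → V̄ be the induced map. If f̄ is surjective, then f(A₀) = V₀ (in particular f is surjective), and the image of ker(f) ∩ A₀ in Ā is exactly ker(f̄). -/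
noncomputable section

namespace ModpStmt

/-- Let `f : A → V` be a continuous `L`-linear map of Banach spaces
over a finite extension `L` of `ℚ_p` (norms nonarchimedean, compatible with the norm of
`L`, and taking values in the norm group `|L| = ‖π‖^ℤ ∪ {0}` of `L`, where `π` is a
uniformizer), with `f(A₀) ⊆ V₀` (here `W₀ = {w : ‖w‖ ≤ 1}` and `W̄ = W₀/𝔪W₀`, so that
`w ∈ 𝔪W₀ ↔ ‖w‖ ≤ ‖π‖`). If the induced map `f̄ : Ā → V̄` is surjective — i.e. every
`v ∈ V₀` is within `‖π‖` of some `f(a)`, `a ∈ A₀` — then `f(A₀) = V₀` (in particular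
`f` is surjective), and the image of `ker f ∩ A₀` in `Ā` is exactly `ker f̄` — i.e.
every `a ∈ A₀` with `‖f a‖ ≤ ‖π‖` is within `‖π‖` of some `a' ∈ A₀` with `f a' = 0`
(the reverse inclusion being automatic). -/
theorem statement_13 {L : Type*} [NontriviallyNormedField L] [CompleteSpace L]
    [IsUltrametricDist L]
    (π : L) (hπ0 : 0 < ‖π‖) (hπ1 : ‖π‖ < 1)
    (hdisc : ∀ z : L, z ≠ 0 → ∃ k : ℤ, ‖z‖ = ‖π‖ ^ k)
    {A V : Type*}
    [NormedAddCommGroup A] [NormedSpace L A] [CompleteSpace A] [IsUltrametricDist A]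
    [NormedAddCommGroup V] [NormedSpace L V] [CompleteSpace V] [IsUltrametricDist V]
    (hAnorm : ∀ a : A, a ≠ 0 → ∃ k : ℤ, ‖a‖ = ‖π‖ ^ k)
    (hVnorm : ∀ v : V, v ≠ 0 → ∃ k : ℤ, ‖v‖ = ‖π‖ ^ k)
    (f : A →L[L] V) (hf : ∀ a : A, ‖a‖ ≤ 1 → ‖f a‖ ≤ 1)
    (hsurj : ∀ v : V, ‖v‖ ≤ 1 → ∃ a : A, ‖a‖ ≤ 1 ∧ ‖f a - v‖ ≤ ‖π‖) :
    (∀ v : V, ‖v‖ ≤ 1 → ∃ a : A, ‖a‖ ≤ 1 ∧ f a = v) ∧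
    Function.Surjective (f : A → V) ∧
    ((∀ a : A, ‖a‖ ≤ 1 → f a = 0 → ‖f a‖ ≤ ‖π‖) ∧
      ∀ a : A, ‖a‖ ≤ 1 → ‖f a‖ ≤ ‖π‖ →
        ∃ a' : A, f a' = 0 ∧ ‖a'‖ ≤ 1 ∧ ‖a - a'‖ ≤ ‖π‖) := by
  have hπne : π ≠ 0 := by simpa using hπ0.ne'
  -- the choice function
  have key : ∀ v : V, ‖v‖ ≤ 1 → ∃ a : A, ‖a‖ ≤ 1 ∧ f a = v := by
    intro v₀ hv₀
    classical
    set F : V → A := fun w => if h : ‖w‖ ≤ 1 then (hsurj w h).choose else 0 with hF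
    -- build the sequence of remainders
    set w : ℕ → V := fun n => Nat.rec v₀ (fun _ wn => π⁻¹ • (wn - f (F wn))) n with hw
    have hw0 : w 0 = v₀ := rfl
    have hwsucc : ∀ n, w (n + 1) = π⁻¹ • (w n - f (F (w n))) := fun n => rfl
    have hnorm : ∀ n, ‖w n‖ ≤ 1 := by
      intro n
      induction n with
      | zero => exact hv₀
      | succ n ih =>
        have hFspec := (hsurj (w n) ih).choose_spec
        have hFn : F (w n) = (hsurj (w n) ih).choose := by simp [hF, ih]
        rw [hwsucc, norm_smul, norm_inv]
        rw [inv_mul_le_one₀ hπ0]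
        calc ‖w n - f (F (w n))‖ = ‖f (F (w n)) - w n‖ := by rw [norm_sub_rev]
          _ ≤ ‖π‖ := by rw [hFn]; exact hFspec.2
    have haFle : ∀ n, ‖F (w n)‖ ≤ 1 := by
      intro n
      have := (hsurj (w n) (hnorm n)).choose_spec
      have hFn : F (w n) = (hsurj (w n) (hnorm n)).choose := by simp [hF, hnorm n]
      rw [hFn]; exact this.1
    -- key identity: f (F (w n)) = w n - π • w (n+1)
    have hid : ∀ n, f (F (w n)) = w n - π • w (n + 1) := by
      intro n
      rw [hwsucc, smul_smul, mul_inv_cancel₀ hπne, one_smul]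
      abel
    -- the series
    set g : ℕ → A := fun n => (π ^ n) • F (w n) with hg
    have hgnorm : ∀ n, ‖g n‖ ≤ ‖π‖ ^ n := by
      intro n
      rw [hg]
      simp only [norm_smul, norm_pow]
      calc ‖π‖ ^ n * ‖F (w n)‖ ≤ ‖π‖ ^ n * 1 :=
            mul_le_mul_of_nonneg_left (haFle n) (by positivity)
        _ = ‖π‖ ^ n := mul_one _
    have hsum : Summable g :=
      Summable.of_norm_bounded (summable_geometric_of_lt_one hπ0.le hπ1) hgnorm
    set a : A := ∑' n, g n with ha
    -- partial sums of g
    have htend : Filter.Tendsto (fun n => ∑ i ∈ Finset.range n, g i) Filter.atTop (nhds a) :=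
      hsum.hasSum.tendsto_sum_nat
    -- norm bound
    have hanorm : ‖a‖ ≤ 1 := by
      have h1 : Filter.Tendsto (fun n => ‖∑ i ∈ Finset.range n, g i‖) Filter.atTop (nhds ‖a‖) :=
        htend.norm
      refine le_of_tendsto h1 (Filter.Eventually.of_forall fun n => ?_)
      refine IsUltrametricDist.norm_sum_le_of_forall_le_of_nonneg zero_le_one fun i _ => ?_
      calc ‖g i‖ ≤ ‖π‖ ^ i := hgnorm i
        _ ≤ 1 := pow_le_one₀ hπ0.le hπ1.le
    refine ⟨a, hanorm, ?_⟩
    -- f a = v₀ via telescoping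
    have hfa : Filter.Tendsto (fun n => f (∑ i ∈ Finset.range n, g i)) Filter.atTop (nhds (f a)) :=
      (f.continuous.tendsto a).comp htend
    have hpart : ∀ n, f (∑ i ∈ Finset.range n, g i) = v₀ - (π ^ n) • w n := by
      intro n
      rw [map_sum]
      have : ∀ i, f (g i) = (π ^ i) • w i - (π ^ (i + 1)) • w (i + 1) := by
        intro i
        rw [hg]
        simp only [map_smul, hid i, smul_sub, smul_smul, pow_succ, mul_comm]
      simp only [this]
      rw [Finset.sum_range_sub' (fun i => (π ^ i) • w i)]
      simp [hw0]
    have hwz : Filter.Tendsto (fun n => (π ^ n) • w n) Filter.atTop (nhds (0 : V)) := by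
      rw [tendsto_zero_iff_norm_tendsto_zero]
      refine squeeze_zero (fun n => norm_nonneg _) (fun n => ?_)
        (tendsto_pow_atTop_nhds_zero_of_lt_one hπ0.le hπ1)
      rw [norm_smul, norm_pow]
      calc ‖π‖ ^ n * ‖w n‖ ≤ ‖π‖ ^ n * 1 :=
            mul_le_mul_of_nonneg_left (hnorm n) (by positivity)
        _ = ‖π‖ ^ n := mul_one _
    have hlim : Filter.Tendsto (fun n => f (∑ i ∈ Finset.range n, g i)) Filter.atTop
        (nhds v₀) := by
      simp only [hpart]
      simpa using (tendsto_const_nhds (x := v₀)).sub hwz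
    exact tendsto_nhds_unique hfa hlim
  refine ⟨key, ?_, fun a _ h => by rw [h]; simp [hπ0.le], ?_⟩
  · -- surjectivity
    intro v
    by_cases hv : v = 0
    · exact ⟨0, by simp [hv]⟩
    rcases hVnorm v hv with ⟨k, hk⟩
    rcases le_or_gt ‖v‖ 1 with h1 | h1
    · obtain ⟨a, _, ha⟩ := key v h1
      exact ⟨a, ha⟩
    · have hkneg : k < 0 := by
        by_contra h
        push_neg at h
        lift k to ℕ using h
        rw [zpow_natCast] at hk
        have : ‖v‖ ≤ 1 := hk ▸ pow_le_one₀ hπ0.le hπ1.le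
        exact absurd this (not_le.mpr h1)
      set m : ℕ := (-k).toNat with hmdef
      have hm : (m : ℤ) = -k := Int.toNat_of_nonneg (by omega)
      have hsm : ‖(π ^ m) • v‖ ≤ 1 := by
        rw [norm_smul, norm_pow, ← zpow_natCast, hk, ← zpow_add₀ hπ0.ne', hm, neg_add_cancel,
          zpow_zero]
      obtain ⟨a, _, ha⟩ := key _ hsm
      refine ⟨(π ^ m)⁻¹ • a, ?_⟩
      rw [map_smul, ha, inv_smul_smul₀ (pow_ne_zero m hπne)]
  · -- kernel part
    intro a ha hfa
    have hv' : ‖π⁻¹ • f a‖ ≤ 1 := by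
      rw [norm_smul, norm_inv, inv_mul_le_one₀ hπ0]
      exact hfa
    obtain ⟨b, hb1, hb2⟩ := key (π⁻¹ • f a) hv'
    refine ⟨a - π • b, ?_, ?_, ?_⟩
    · rw [map_sub, map_smul, hb2, smul_smul, mul_inv_cancel₀ hπne, one_smul, sub_self]
    · rw [sub_eq_add_neg]
      refine le_trans (IsUltrametricDist.norm_add_le_max _ _) (max_le ha ?_)
      rw [norm_neg]
      rw [norm_smul]
      calc ‖π‖ * ‖b‖ ≤ ‖π‖ * 1 := mul_le_mul_of_nonneg_left hb1 hπ0.le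
        _ = ‖π‖ := mul_one _
        _ ≤ 1 := hπ1.le
    · simp only [sub_sub_cancel, norm_smul]
      calc ‖π‖ * ‖b‖ ≤ ‖π‖ * 1 := mul_le_mul_of_nonneg_left hb1 hπ0.le
        _ = ‖π‖ := mul_one _
end ModpStmt
end
end
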